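/- arXiv:2602.05725 — 14 statements merged into one kernel-verified Lean document; each statement's English description precedes it below -/
import Mathlib

section
/- Let K ≥ 2. For every γ ∈ ℝ, the noiseless cross-entropy loss of the linear softmax associative memory model at the weight matrix W = γ · Ẽ Eᵀ equals L(W) = log(1 + (K−1)·exp(−γ)). Consequently L(γ · Ẽ Eᵀ) tends to 0 as γ → ∞. -/
open Matrix Real Filter

/-- Predicted softmax probability `p̂_{i|j}(W)` of the linear softmax associative memory model. -/
noncomputable def predProb {K : ℕ} (E Et W : Matrix (Fin K) (Fin K) ℝ) (i j : Fin K) : ℝ :=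
  Real.exp ((Etᵀ * W * E) i j) / ∑ l, Real.exp ((Etᵀ * W * E) l j)

/-- Noiseless cross-entropy loss `L(W) = −∑_j p_j log p̂_{j|j}(W)`. -/
noncomputable def lossNoiseless {K : ℕ} (E Et : Matrix (Fin K) (Fin K) ℝ) (p : Fin K → ℝ)
    (W : Matrix (Fin K) (Fin K) ℝ) : ℝ :=
  -∑ j, p j * Real.log (predProb E Et W j j)

theorem stmt0 {K : ℕ} (hK : 2 ≤ K)
    (E Et : Matrix (Fin K) (Fin K) ℝ)
    (hE : Eᵀ * E = 1) (hEt : Etᵀ * Et = 1)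
    (p : Fin K → ℝ) (hp : ∀ j, 0 < p j) (hp1 : ∑ j, p j = 1) :
    (∀ γ : ℝ, lossNoiseless E Et p (γ • (Et * Eᵀ))
        = Real.log (1 + (K - 1) * Real.exp (-γ))) ∧
    Tendsto (fun γ : ℝ => lossNoiseless E Et p (γ • (Et * Eᵀ))) atTop (nhds 0) := by
  have hK1 : (1 : ℝ) ≤ (K : ℝ) - 1 := by
    have : (2 : ℝ) ≤ (K : ℝ) := by exact_mod_cast hK
    linarith
  have hmat : ∀ γ : ℝ, Etᵀ * (γ • (Et * Eᵀ)) * E = γ • (1 : Matrix (Fin K) (Fin K) ℝ) := by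
    intro γ
    have h : Etᵀ * (Et * Eᵀ) * E = (Etᵀ * Et) * (Eᵀ * E) := by
      rw [Matrix.mul_assoc, Matrix.mul_assoc, Matrix.mul_assoc]
    rw [Matrix.mul_smul, Matrix.smul_mul, h, hE, hEt, Matrix.one_mul]
  have key : ∀ γ : ℝ, lossNoiseless E Et p (γ • (Et * Eᵀ))
      = Real.log (1 + (K - 1) * Real.exp (-γ)) := by
    intro γ
    set A : ℝ := 1 + ((K : ℝ) - 1) * Real.exp (-γ) with hA
    have hden : (0 : ℝ) < A := by
      have := Real.exp_pos (-γ)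
      nlinarith
    have hentry : ∀ i j : Fin K, (Etᵀ * (γ • (Et * Eᵀ)) * E) i j = if i = j then γ else 0 := by
      intro i j
      rw [hmat γ]
      simp [Matrix.one_apply]
    have hsum : ∀ j : Fin K, ∑ l, Real.exp ((Etᵀ * (γ • (Et * Eᵀ)) * E) l j)
        = Real.exp γ + ((K : ℝ) - 1) := by
      intro j
      simp only [hentry]
      have h1 : ∀ l : Fin K, Real.exp (if l = j then γ else 0)
          = (if l = j then Real.exp γ - 1 else 0) + 1 := by
        intro l; split <;> simp [Real.exp_zero]
      rw [Finset.sum_congr rfl (fun l _ => h1 l), Finset.sum_add_distrib,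
        Finset.sum_ite_eq' Finset.univ j (fun _ => Real.exp γ - 1)]
      simp
      ring
    have hmul : Real.exp γ * Real.exp (-γ) = 1 := by
      rw [← Real.exp_add]; simp
    have hpred : ∀ j : Fin K, predProb E Et (γ • (Et * Eᵀ)) j j = A⁻¹ := by
      intro j
      unfold predProb
      rw [hsum j, hentry j j, if_pos rfl, inv_eq_one_div,
        div_eq_div_iff (by positivity) hden.ne', one_mul]
      rw [hA]
      nlinarith [hmul]
    have hlog : Real.log A⁻¹ = -Real.log A := Real.log_inv A
    unfold lossNoiseless
    simp only [hpred, hlog]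
    rw [← Finset.sum_mul, hp1]
    push_cast
    ring_nf
  refine ⟨key, ?_⟩
  have h1 : Tendsto (fun γ : ℝ => 1 + ((K : ℝ) - 1) * Real.exp (-γ)) atTop (nhds 1) := by
    have := Real.tendsto_exp_neg_atTop_nhds_zero
    have h2 : Tendsto (fun γ : ℝ => ((K : ℝ) - 1) * Real.exp (-γ)) atTop (nhds 0) := by
      simpa using this.const_mul ((K : ℝ) - 1)
    simpa using h2.const_add 1
  have : Tendsto (fun γ : ℝ => Real.log (1 + ((K : ℝ) - 1) * Real.exp (-γ))) atTop (nhds 0) := by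
    have := (Real.continuousAt_log (by norm_num)).tendsto.comp h1
    simpa [Function.comp_def] using this
  refine this.congr fun γ => (key γ).symm
end

section
/- Let K ≥ 2 and α ∈ [0,1). The noisy cross-entropy loss L is differentiable at every real K×K matrix W, and its Fréchet derivative at W is the linear functional H ↦ ∑_{i=1}^K ∑_{j=1}^K p_j · (p̂_{i|j}(W) − p_{i|j}) · (Ẽ_iᵀ H E_j); equivalently, the gradient of L at W is the matrix ∑_{i,j} p_j (p̂_{i|j}(W) − p_{i|j}) · Ẽ_i E_jᵀ. -/
open Matrix Real Filter

attribute [local instance] Matrix.normedAddCommGroup Matrix.normedSpace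

/-- Noisy conditional probabilities `p_{i|j}` under label-noise level `α`. -/
noncomputable def pcond (K : ℕ) (α : ℝ) (i j : Fin K) : ℝ :=
  if i = j then 1 - α + α / K else α / K

/-- Noisy cross-entropy loss `L(W) = −∑_j p_j ∑_i p_{i|j} log p̂_{i|j}(W)`. -/
noncomputable def lossNoisy {K : ℕ} (E Et : Matrix (Fin K) (Fin K) ℝ) (p : Fin K → ℝ)
    (α : ℝ) (W : Matrix (Fin K) (Fin K) ℝ) : ℝ :=
  -∑ j, p j * ∑ i, pcond K α i j * Real.log (predProb E Et W i j)

/-- The linear functional `H ↦ ∑_{i,j} c_{i,j} · (Ẽ_iᵀ H E_j)`, as a continuous linear map on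
matrices. Note that `Ẽ_iᵀ H E_j = (Ẽᵀ H E)_{i,j}`. -/
noncomputable def gradCLM {K : ℕ} (E Et : Matrix (Fin K) (Fin K) ℝ)
    (c : Fin K → Fin K → ℝ) : Matrix (Fin K) (Fin K) ℝ →L[ℝ] ℝ :=
  LinearMap.toContinuousLinearMap
    { toFun := fun H => ∑ i, ∑ j, c i j * (Etᵀ * H * E) i j
      map_add' := by
        intro H1 H2
        simp [Matrix.add_mul, Matrix.mul_add, Matrix.add_apply, mul_add,
          Finset.sum_add_distrib]
      map_smul' := by
        intro r H
        simp only [Matrix.smul_mul, Matrix.mul_smul, Matrix.smul_apply, smul_eq_mul,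
          RingHom.id_apply, Finset.mul_sum]
        exact Finset.sum_congr rfl fun i _ => Finset.sum_congr rfl fun j _ => by ring }


/-- Entry-extraction continuous linear map `H ↦ (Etᵀ H E) i j`. -/
noncomputable def entryCLM {K : ℕ} (E Et : Matrix (Fin K) (Fin K) ℝ) (i j : Fin K) :
    Matrix (Fin K) (Fin K) ℝ →L[ℝ] ℝ :=
  LinearMap.toContinuousLinearMap
    { toFun := fun H => (Etᵀ * H * E) i j
      map_add' := by
        intro H1 H2
        simp [Matrix.add_mul, Matrix.mul_add, Matrix.add_apply]
      map_smul' := by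
        intro r H
        simp [Matrix.smul_mul, Matrix.mul_smul, Matrix.smul_apply] }

lemma entryCLM_apply {K : ℕ} (E Et : Matrix (Fin K) (Fin K) ℝ) (i j : Fin K)
    (H : Matrix (Fin K) (Fin K) ℝ) : entryCLM E Et i j H = (Etᵀ * H * E) i j := rfl

lemma gradCLM_apply {K : ℕ} (E Et : Matrix (Fin K) (Fin K) ℝ) (c : Fin K → Fin K → ℝ)
    (H : Matrix (Fin K) (Fin K) ℝ) :
    gradCLM E Et c H = ∑ i, ∑ j, c i j * (Etᵀ * H * E) i j := rfl

lemma hasFDerivAt_entry {K : ℕ} (E Et : Matrix (Fin K) (Fin K) ℝ) (i j : Fin K)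
    (W : Matrix (Fin K) (Fin K) ℝ) :
    HasFDerivAt (fun V => (Etᵀ * V * E) i j) (entryCLM E Et i j) W :=
  (entryCLM E Et i j).hasFDerivAt

theorem stmt2 {K : ℕ} (hK : 2 ≤ K) (α : ℝ) (hα0 : 0 ≤ α) (hα1 : α < 1)
    (E Et : Matrix (Fin K) (Fin K) ℝ)
    (hE : Eᵀ * E = 1) (hEt : Etᵀ * Et = 1)
    (p : Fin K → ℝ) (hp : ∀ j, 0 < p j) (hp1 : ∑ j, p j = 1) :
    ∀ W : Matrix (Fin K) (Fin K) ℝ,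
      HasFDerivAt (lossNoisy E Et p α)
        (gradCLM E Et (fun i j => p j * (predProb E Et W i j - pcond K α i j))) W ∧
      -- equivalently, the gradient is the matrix `∑_{i,j} p_j (p̂_{i|j}(W) − p_{i|j}) Ẽ_i E_jᵀ`,
      -- acting on `H` through the Frobenius inner product `trace (Gᵀ H)`:
      ∀ H : Matrix (Fin K) (Fin K) ℝ,
        gradCLM E Et (fun i j => p j * (predProb E Et W i j - pcond K α i j)) H
          = Matrix.trace
              ((∑ i, ∑ j, (p j * (predProb E Et W i j - pcond K α i j)) •
                  Matrix.vecMulVec (fun a => Et a i) (fun b => E b j))ᵀ * H) := by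

  intro W
  have hK0 : 0 < K := lt_of_lt_of_le (by norm_num) hK
  have hNe : Nonempty (Fin K) := ⟨⟨0, hK0⟩⟩
  have hZ : ∀ (V : Matrix (Fin K) (Fin K) ℝ) (j : Fin K),
      0 < ∑ l, Real.exp ((Etᵀ * V * E) l j) := fun V j =>
    Finset.sum_pos (fun l _ => Real.exp_pos _) Finset.univ_nonempty
  have hpcsum : ∀ j : Fin K, ∑ i, pcond K α i j = 1 := by
    intro j
    have hpc : ∀ i : Fin K, pcond K α i j = α / K + if i = j then (1 - α) else 0 := by
      intro i; unfold pcond; split <;> ring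
    simp only [hpc, Finset.sum_add_distrib, Finset.sum_const, Finset.card_univ,
      Fintype.card_fin, nsmul_eq_mul, Finset.sum_ite_eq', Finset.mem_univ, if_true]
    field_simp
    ring
  have hloss : ∀ V : Matrix (Fin K) (Fin K) ℝ, lossNoisy E Et p α V =
      ∑ j, p j * (Real.log (∑ l, Real.exp ((Etᵀ * V * E) l j))
        - ∑ i, pcond K α i j * (Etᵀ * V * E) i j) := by
    intro V
    unfold lossNoisy predProb
    rw [neg_eq_iff_eq_neg, ← Finset.sum_neg_distrib]
    refine Finset.sum_congr rfl fun j _ => ?_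
    have hlog : ∀ i, Real.log (Real.exp ((Etᵀ * V * E) i j) / ∑ l, Real.exp ((Etᵀ * V * E) l j))
        = (Etᵀ * V * E) i j - Real.log (∑ l, Real.exp ((Etᵀ * V * E) l j)) := fun i => by
      rw [Real.log_div (Real.exp_ne_zero _) (ne_of_gt (hZ V j)), Real.log_exp]
    simp only [hlog, mul_sub, Finset.sum_sub_distrib, ← Finset.sum_mul, hpcsum, one_mul]
    ring
  constructor
  · -- derivative of log Z_j
    have hZd : ∀ j : Fin K, HasFDerivAt
        (fun V => Real.log (∑ l, Real.exp ((Etᵀ * V * E) l j)))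
        (∑ l, predProb E Et W l j • entryCLM E Et l j) W := by
      intro j
      have h1 : HasFDerivAt (fun V => ∑ l, Real.exp ((Etᵀ * V * E) l j))
          (∑ l, Real.exp ((Etᵀ * W * E) l j) • entryCLM E Et l j) W :=
        HasFDerivAt.fun_sum fun l _ => (hasFDerivAt_entry E Et l j W).exp
      have h2 := h1.log (ne_of_gt (hZ W j))
      have h2' : HasFDerivAt (fun V => Real.log (∑ l, Real.exp ((Etᵀ * V * E) l j)))
          ((∑ l, Real.exp ((Etᵀ * W * E) l j))⁻¹ •
            ∑ l, Real.exp ((Etᵀ * W * E) l j) • entryCLM E Et l j) W := h2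
      convert h2' using 1
      rw [Finset.smul_sum]
      refine Finset.sum_congr rfl fun l _ => ?_
      rw [smul_smul]
      unfold predProb
      rw [div_eq_inv_mul]
    have hD : HasFDerivAt
        (fun V => ∑ j, p j * (Real.log (∑ l, Real.exp ((Etᵀ * V * E) l j))
          - ∑ i, pcond K α i j * (Etᵀ * V * E) i j))
        (∑ j, p j • ((∑ l, predProb E Et W l j • entryCLM E Et l j)
          - ∑ i, pcond K α i j • entryCLM E Et i j)) W := by
      refine HasFDerivAt.fun_sum fun j _ => ?_
      have hin : HasFDerivAt (fun V => ∑ i, pcond K α i j * (Etᵀ * V * E) i j)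
          (∑ i, pcond K α i j • entryCLM E Et i j) W :=
        HasFDerivAt.fun_sum fun i _ => (hasFDerivAt_entry E Et i j W).const_mul _
      exact ((hZd j).sub hin).const_mul (p j)
    have hclm : (∑ j, p j • ((∑ l, predProb E Et W l j • entryCLM E Et l j)
          - ∑ i, pcond K α i j • entryCLM E Et i j))
        = gradCLM E Et (fun i j => p j * (predProb E Et W i j - pcond K α i j)) := by
      refine ContinuousLinearMap.ext fun H => ?_
      rw [gradCLM_apply, Finset.sum_comm]
      simp only [ContinuousLinearMap.sum_apply, ContinuousLinearMap.smul_apply,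
        ContinuousLinearMap.sub_apply, entryCLM_apply, smul_eq_mul]
      refine Finset.sum_congr rfl fun j _ => ?_
      rw [← Finset.sum_sub_distrib, Finset.mul_sum]
      refine Finset.sum_congr rfl fun i _ => ?_
      ring
    rw [← hclm]
    exact hD.congr_of_eventuallyEq (Filter.Eventually.of_forall fun V => hloss V)
  · intro H
    rw [gradCLM_apply]
    simp only [Matrix.transpose_sum, Matrix.sum_mul, Matrix.trace_sum, Matrix.transpose_smul,
      Matrix.smul_mul, Matrix.trace_smul, smul_eq_mul]
    refine Finset.sum_congr rfl fun i _ => Finset.sum_congr rfl fun j _ => ?_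
    congr 1
    simp only [Matrix.trace, Matrix.diag_apply, Matrix.mul_apply, Matrix.transpose_apply,
      Matrix.vecMulVec_apply, Finset.sum_mul]
    refine Finset.sum_congr rfl fun k _ => Finset.sum_congr rfl fun a _ => ?_
    ring
end

section
/- Let K ≥ 2, α ∈ [0,1), and η > 0. Define a sequence of real K×K matrices V : ℕ → Matrix by V_0 = 0 and V_{t+1} = V_t − η·G(V_t), where G(V)_{i,j} = p_j · (softmax(V·,j)_i − p_{i|j}) and softmax(V·,j)_i = exp(V_{i,j}) / ∑_{l=1}^K exp(V_{l,j}). Then for every time step t, every column index j, and all row indices i₁, i₂ with i₁ ≠ j and i₂ ≠ j, one has (V_t)_{i₁,j} = (V_t)_{i₂,j}. -/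
open Matrix Real Filter

/-- Softmax of the `j`-th column of `V`, evaluated at row `i`. -/
noncomputable def softmaxCol {K : ℕ} (V : Matrix (Fin K) (Fin K) ℝ) (i j : Fin K) : ℝ :=
  Real.exp (V i j) / ∑ l, Real.exp (V l j)

/-- Gradient in the task-representation space:
`G(V)_{i,j} = p_j (softmax(V·,j)_i − p_{i|j})`. -/
noncomputable def Gmat {K : ℕ} (α : ℝ) (p : Fin K → ℝ) (V : Matrix (Fin K) (Fin K) ℝ) :
    Matrix (Fin K) (Fin K) ℝ :=
  Matrix.of fun i j => p j * (softmaxCol V i j - pcond K α i j)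

theorem stmt3 {K : ℕ} (hK : 2 ≤ K) (α : ℝ) (hα0 : 0 ≤ α) (hα1 : α < 1)
    (η : ℝ) (hη : 0 < η)
    (p : Fin K → ℝ) (hp : ∀ j, 0 < p j) (hp1 : ∑ j, p j = 1)
    (V : ℕ → Matrix (Fin K) (Fin K) ℝ)
    (hV0 : V 0 = 0)
    (hVrec : ∀ t, V (t + 1) = V t - η • Gmat α p (V t)) :
    ∀ (t : ℕ) (j i₁ i₂ : Fin K), i₁ ≠ j → i₂ ≠ j → V t i₁ j = V t i₂ j := by
  intro t
  induction t with
  | zero => intro j i₁ i₂ _ _; simp [hV0]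
  | succ t ih =>
    intro j i₁ i₂ h1 h2
    have hv := ih j i₁ i₂ h1 h2
    have hs : softmaxCol (V t) i₁ j = softmaxCol (V t) i₂ j := by
      simp [softmaxCol, hv]
    simp [hVrec, Gmat, hs, hv, pcond, h1, h2]
end

section
/- Let K ≥ 2 be a natural number, p ∈ (0,1], and η > 0. Define Δ : ℕ → ℝ by Δ_0 = 0 and Δ_{t+1} = Δ_t + η·p·K / (exp(Δ_t) + K − 1). Then exp(Δ_t) / (η·p·K·t) → 1 as t → ∞. -/
open Real Filter Topology

theorem stmt4 (K : ℕ) (hK : 2 ≤ K) (p η : ℝ) (hp0 : 0 < p) (hp1 : p ≤ 1) (hη : 0 < η)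
    (Δ : ℕ → ℝ) (h0 : Δ 0 = 0)
    (hrec : ∀ t, Δ (t + 1) = Δ t + η * p * K / (Real.exp (Δ t) + K - 1)) :
    Tendsto (fun t : ℕ => Real.exp (Δ t) / (η * p * K * t)) atTop (nhds 1) := by
  set c : ℝ := η * p * K with hc_def
  have hK2 : (2:ℝ) ≤ K := by exact_mod_cast hK
  have hKpos : (0:ℝ) < K := by linarith
  have hc : 0 < c := mul_pos (mul_pos hη hp0) hKpos
  have hD : ∀ t, 0 < Real.exp (Δ t) + K - 1 := fun t => by
    have := Real.exp_pos (Δ t); linarith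
  -- Δ is strictly monotone
  have hmono : StrictMono Δ := strictMono_nat_of_lt_succ fun t => by
    rw [hrec t]
    have := div_pos hc (hD t)
    linarith
  -- Δ tends to infinity
  have hB : Tendsto Δ atTop atTop := by
    rcases tendsto_of_monotone hmono.monotone with h | ⟨l, hl⟩
    · exact h
    · exfalso
      have h1 : Tendsto (fun t => Δ (t+1) - Δ t) atTop (𝓝 0) := by
        have := (hl.comp (tendsto_add_atTop_nat 1)).sub hl
        simpa using this
      have hlD : 0 < Real.exp l + K - 1 := by have := Real.exp_pos l; linarith
      have h2 : Tendsto (fun t => c / (Real.exp (Δ t) + K - 1)) atTop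
          (𝓝 (c / (Real.exp l + K - 1))) := by
        refine Tendsto.div tendsto_const_nhds ?_ hlD.ne'
        exact (((Real.continuous_exp.tendsto l).comp hl).add_const (K:ℝ)).sub_const 1
      have heq : (fun t => Δ (t+1) - Δ t)
          = fun t => c / (Real.exp (Δ t) + K - 1) := funext fun t => by
        rw [hrec t]; ring
      rw [heq] at h1
      have hu := tendsto_nhds_unique h1 h2
      have hpos : 0 < c / (Real.exp l + K - 1) := div_pos hc hlD
      rw [← hu] at hpos
      exact lt_irrefl _ hpos
  have hx : Tendsto (fun t => Real.exp (Δ t)) atTop atTop :=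
    Real.tendsto_exp_atTop.comp hB
  have hDtop : Tendsto (fun t => Real.exp (Δ t) + K - 1) atTop atTop := by
    have := tendsto_atTop_add_const_right atTop ((K:ℝ) - 1) hx
    simpa [add_sub_assoc] using this
  -- the step sizes in exp scale tend to c
  have hs_pos : ∀ t, 0 < c / (Real.exp (Δ t) + K - 1) := fun t => div_pos hc (hD t)
  have hs0 : Tendsto (fun t => c / (Real.exp (Δ t) + K - 1)) atTop (𝓝 0) :=
    Tendsto.div_atTop tendsto_const_nhds hDtop
  have hexp : Tendsto (fun y : ℝ => (Real.exp y - 1) / y) (𝓝[≠] 0) (𝓝 1) := by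
    have h := Real.hasDerivAt_exp 0
    rw [hasDerivAt_iff_tendsto_slope] at h
    have hfe : slope Real.exp 0 = fun y => (Real.exp y - 1) / y := funext fun y => by
      rw [slope_def_field, Real.exp_zero, sub_zero]
    rw [hfe, Real.exp_zero] at h
    exact h
  have hsne : Tendsto (fun t => c / (Real.exp (Δ t) + K - 1)) atTop (𝓝[≠] 0) :=
    tendsto_nhdsWithin_of_tendsto_nhds_of_eventually_within _ hs0
      (Eventually.of_forall fun t => by simpa using (hs_pos t).ne')
  have hslope : Tendsto (fun t =>
      (Real.exp (c / (Real.exp (Δ t) + K - 1)) - 1) / (c / (Real.exp (Δ t) + K - 1)))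
      atTop (𝓝 1) := hexp.comp hsne
  -- exp(Δ t)/(exp(Δ t)+K-1) → 1
  have h1 : Tendsto (fun t => ((K:ℝ) - 1) / (Real.exp (Δ t) + K - 1)) atTop (𝓝 0) :=
    Tendsto.div_atTop tendsto_const_nhds hDtop
  have hratio : Tendsto (fun t => Real.exp (Δ t) / (Real.exp (Δ t) + K - 1)) atTop (𝓝 1) := by
    have h2 := (tendsto_const_nhds (x := (1:ℝ)) (f := atTop)).sub h1
    rw [sub_zero] at h2
    refine h2.congr fun t => ?_
    have hDt := (hD t).ne'
    field_simp
    ring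
  -- increments of exp(Δ) tend to c
  have hu : Tendsto (fun t => Real.exp (Δ (t+1)) - Real.exp (Δ t)) atTop (𝓝 c) := by
    have hmul := (tendsto_const_nhds (x := c) (f := atTop)).mul hratio |>.mul hslope
    rw [mul_one, mul_one] at hmul
    refine hmul.congr fun t => ?_
    have hDt := (hD t).ne'
    have hst := (hs_pos t).ne'
    rw [hrec t, Real.exp_add]
    field_simp
  -- Cesàro
  have hces := hu.cesaro
  have hsum : ∀ n, ∑ i ∈ Finset.range n, (Real.exp (Δ (i+1)) - Real.exp (Δ i))
      = Real.exp (Δ n) - 1 := fun n => by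
    rw [Finset.sum_range_sub (fun i => Real.exp (Δ i)), h0, Real.exp_zero]
  have h2 : Tendsto (fun n : ℕ => (n:ℝ)⁻¹ * (Real.exp (Δ n) - 1)) atTop (𝓝 c) := by
    simpa [hsum] using hces
  have hinv : Tendsto (fun n : ℕ => (n:ℝ)⁻¹) atTop (𝓝 0) :=
    tendsto_inv_atTop_zero.comp tendsto_natCast_atTop_atTop
  have h3 : Tendsto (fun n : ℕ => (n:ℝ)⁻¹ * Real.exp (Δ n)) atTop (𝓝 c) := by
    have := h2.add hinv
    rw [add_zero] at this
    refine this.congr fun n => ?_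
    ring
  have h4 := h3.div_const c
  rw [div_self hc.ne'] at h4
  refine h4.congr fun n => ?_
  rw [div_eq_mul_inv, div_eq_mul_inv, mul_inv]
  ring
end

section
/- Let K ≥ 2 be a natural number, p ∈ (0,1], and η > 0. Define Δ : ℕ → ℝ by Δ_0 = 0 and Δ_{t+1} = Δ_t + η·p·K / (exp(Δ_t) + K − 1). Then t · log(1 + (K−1)·exp(−Δ_t)) → (K−1)/(η·p·K) as t → ∞; that is, the noiseless sub-task cross-entropy loss log(1 + (K−1)e^{−Δ_t}) decays like (K−1)/(η p K t). -/
open Real Filter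

private lemma aux_exp_slope :
    Tendsto (fun h : ℝ => (Real.exp h - 1) / h) (nhdsWithin 0 {0}ᶜ) (nhds 1) := by
  have := hasDerivAt_iff_tendsto_slope.mp (Real.hasDerivAt_exp 0)
  simpa [slope_fun_def, Real.exp_zero, div_eq_mul_inv, mul_comm] using this

private lemma aux_y_exp {c : ℝ} (hc : 0 < c) :
    Tendsto (fun y : ℝ => y * (Real.exp (c / y) - 1)) atTop (nhds c) := by
  have hcy : Tendsto (fun y : ℝ => c / y) atTop (nhdsWithin 0 {0}ᶜ) := by
    apply tendsto_nhdsWithin_of_tendsto_nhds_of_eventually_within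
    · simpa using tendsto_inv_atTop_zero.const_mul c |>.congr (fun y => by rw [div_eq_mul_inv])
    · filter_upwards [eventually_gt_atTop (0:ℝ)] with y hy
      exact (div_pos hc hy).ne'
  have h1 : Tendsto (fun y : ℝ => (Real.exp (c / y) - 1) / (c / y)) atTop (nhds 1) :=
    aux_exp_slope.comp hcy
  have h2 := h1.const_mul c
  rw [mul_one] at h2
  apply h2.congr'
  filter_upwards [eventually_gt_atTop (0:ℝ)] with y hy
  field_simp

private lemma aux_x_exp {c a : ℝ} (hc : 0 < c) (ha : 0 < a) :
    Tendsto (fun x : ℝ => x * (Real.exp (c / (x + a)) - 1)) atTop (nhds c) := by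
  have h1 : Tendsto (fun x : ℝ => (x + a) * (Real.exp (c / (x + a)) - 1)) atTop (nhds c) :=
    (aux_y_exp hc).comp (tendsto_atTop_add_const_right atTop a tendsto_id)
  have h0 : Tendsto (fun x : ℝ => a / (x + a)) atTop (nhds 0) := by
    have := (tendsto_inv_atTop_zero.comp (tendsto_atTop_add_const_right atTop a tendsto_id)).const_mul a
    rw [mul_zero] at this
    exact this.congr (fun x => by simp [Function.comp, div_eq_mul_inv])
  have h2 : Tendsto (fun x : ℝ => x / (x + a)) atTop (nhds 1) := by
    have := (tendsto_const_nhds (x := (1:ℝ)) (f := atTop)).sub h0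
    rw [sub_zero] at this
    apply this.congr'
    filter_upwards [eventually_gt_atTop (0:ℝ)] with x hx
    have hxa : x + a ≠ 0 := by positivity
    field_simp
    ring
  have h3 := h2.mul h1
  rw [one_mul] at h3
  apply h3.congr'
  filter_upwards [eventually_gt_atTop (0:ℝ)] with x hx
  have hxa : x + a ≠ 0 := by positivity
  field_simp

theorem stmt5 (K : ℕ) (hK : 2 ≤ K) (p η : ℝ) (hp0 : 0 < p) (hp1 : p ≤ 1) (hη : 0 < η)
    (Δ : ℕ → ℝ) (h0 : Δ 0 = 0)
    (hrec : ∀ t, Δ (t + 1) = Δ t + η * p * K / (Real.exp (Δ t) + K - 1)) :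
    Tendsto (fun t : ℕ => (t : ℝ) * Real.log (1 + (K - 1) * Real.exp (-Δ t))) atTop
      (nhds ((K - 1) / (η * p * K))) := by
  set c : ℝ := η * p * K with hcdef
  set a : ℝ := (K : ℝ) - 1 with hadef
  have hKR : (2:ℝ) ≤ (K:ℝ) := by exact_mod_cast hK
  have ha : 1 ≤ a := by simp [hadef]; linarith
  have ha0 : 0 < a := by linarith
  have hc : 0 < c := by
    have : (0:ℝ) < (K:ℝ) := by linarith
    positivity
  set u : ℕ → ℝ := fun t => Real.exp (Δ t) with hudef
  have hΔ0 : ∀ t, 0 ≤ Δ t := by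
    intro t
    induction t with
    | zero => simp [h0]
    | succ n ih =>
      rw [hrec n]
      have hden : 0 < Real.exp (Δ n) + K - 1 := by
        have := Real.exp_pos (Δ n); linarith
      have : 0 ≤ c / (Real.exp (Δ n) + K - 1) := le_of_lt (div_pos hc hden)
      linarith
  have hu1 : ∀ t, 1 ≤ u t := fun t => by
    simpa [hudef] using Real.one_le_exp (hΔ0 t)
  have hupos : ∀ t, 0 < u t := fun t => lt_of_lt_of_le one_pos (hu1 t)
  have hurec : ∀ t, u (t + 1) = u t * Real.exp (c / (u t + a)) := by
    intro t
    have : Real.exp (Δ t) + K - 1 = u t + a := by simp [hudef, hadef]; ring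
    rw [hudef]
    simp only [hrec t, Real.exp_add]
    rw [this]
  -- u tends to atTop
  have hstep : ∀ t, c / K ≤ u (t + 1) - u t := by
    intro t
    have hua : 0 < u t + a := by linarith [hupos t]
    have h1 : c / (u t + a) + 1 ≤ Real.exp (c / (u t + a)) := by
      have := Real.add_one_le_exp (c / (u t + a)); linarith
    have h2 : u t * (c / (u t + a)) ≤ u (t + 1) - u t := by
      rw [hurec t]
      nlinarith [hupos t]
    have h3 : u t + a ≤ (K:ℝ) * u t := by
      have : a ≤ a * u t := le_mul_of_one_le_right (le_of_lt ha0) (hu1 t)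
      have hK1 : (K:ℝ) = 1 + a := by simp [hadef]
      nlinarith [hu1 t]
    have h4 : c / K ≤ u t * (c / (u t + a)) := by
      have hKpos : (0:ℝ) < (K:ℝ) := by linarith
      rw [← mul_div_assoc, div_le_div_iff₀ hKpos hua]
      nlinarith
    linarith
  have huTop : Tendsto u atTop atTop := by
    have hlin : ∀ n : ℕ, 1 + (c / K) * n ≤ u n := by
      intro n
      induction n with
      | zero => simp [hu1 0]
      | succ m ih =>
        have := hstep m
        push_cast
        nlinarith
    apply tendsto_atTop_mono hlin
    apply tendsto_atTop_add_const_left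
    exact (tendsto_natCast_atTop_atTop (R := ℝ)).const_mul_atTop
      (div_pos hc (by linarith : (0:ℝ) < (K:ℝ)))
  -- differences tend to c
  set d : ℕ → ℝ := fun t => u (t + 1) - u t with hddef
  have hd : Tendsto d atTop (nhds c) := by
    have := (aux_x_exp hc ha0).comp huTop
    apply this.congr
    intro t
    simp only [Function.comp, hddef, hurec t]
    ring
  -- Cesàro
  have hces : Tendsto (fun n : ℕ => ((n:ℝ))⁻¹ * (u n - 1)) atTop (nhds c) := by
    have := hd.cesaro
    apply this.congr
    intro n
    have hsum : ∑ i ∈ Finset.range n, d i = u n - 1 := by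
      rw [Finset.sum_range_sub (f := u)]
      simp [hudef, h0]
    rw [hsum]
  have hinvn : Tendsto (fun n : ℕ => ((n:ℝ))⁻¹) atTop (nhds 0) :=
    tendsto_inv_atTop_nhds_zero_nat
  have huq : Tendsto (fun n : ℕ => u n / n) atTop (nhds c) := by
    have h := hces.add hinvn
    rw [add_zero] at h
    apply h.congr'
    filter_upwards [eventually_ge_atTop 1] with n hn
    have hn0 : (n:ℝ) ≠ 0 := Nat.cast_ne_zero.mpr (by omega)
    field_simp
    ring
  have hinv : Tendsto (fun n : ℕ => (n:ℝ) / u n) atTop (nhds c⁻¹) := by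
    have h := huq.inv₀ hc.ne'
    apply h.congr
    intro n
    rw [inv_div]
  have hlog : Tendsto (fun n : ℕ => u n * Real.log (1 + a / u n)) atTop (nhds a) :=
    (Real.tendsto_mul_log_one_add_div_atTop a).comp huTop
  have hfin := hinv.mul hlog
  have hval : c⁻¹ * a = ((K:ℝ) - 1) / (η * p * K) := by
    rw [hadef, hcdef]; rw [inv_mul_eq_div]
  rw [hval] at hfin
  apply hfin.congr
  intro n
  have hun : u n ≠ 0 := (hupos n).ne'
  have hexp : Real.exp (-Δ n) = (u n)⁻¹ := by
    rw [hudef, Real.exp_neg]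
  rw [hexp, ← div_eq_mul_inv]
  field_simp
end

section
/- Let K ≥ 2 be a natural number, α ∈ (0,1), η > 0, and p > 0. Define f : ℝ → ℝ by f(Δ) = Δ + η·p·K/(exp(Δ) + K − 1) − α·η·p, and set Δ* = log(K·(1−α+α/K)/α). Then: (i) f(Δ*) = Δ*; (ii) f is differentiable at Δ* with f′(Δ*) = 1 − η·p·α·(1−α+α/K); and (iii) |f′(Δ*)| < 1 if and only if η·p·α·(1−α+α/K) < 2. -/
open Real Filter

theorem stmt6 (K : ℕ) (hK : 2 ≤ K) (α : ℝ) (hα0 : 0 < α) (hα1 : α < 1)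
    (η p : ℝ) (hη : 0 < η) (hp : 0 < p)
    (f : ℝ → ℝ)
    (hf : ∀ Δ : ℝ, f Δ = Δ + η * p * K / (Real.exp Δ + K - 1) - α * η * p)
    (Δstar : ℝ) (hΔstar : Δstar = Real.log (K * (1 - α + α / K) / α)) :
    f Δstar = Δstar ∧
    HasDerivAt f (1 - η * p * α * (1 - α + α / K)) Δstar ∧
    (|1 - η * p * α * (1 - α + α / K)| < 1 ↔ η * p * α * (1 - α + α / K) < 2) := by
  have hK2 : (2 : ℝ) ≤ (K : ℝ) := by exact_mod_cast hK
  have hKpos : (0 : ℝ) < K := by linarith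
  have hc : (0 : ℝ) < 1 - α + α / K := by
    have : 0 < α / K := div_pos hα0 hKpos
    linarith
  have hE : (0 : ℝ) < K * (1 - α + α / K) / α :=
    div_pos (mul_pos hKpos hc) hα0
  have hexp : Real.exp Δstar = K * (1 - α + α / K) / α := by
    rw [hΔstar, Real.exp_log hE]
  have hden : Real.exp Δstar + K - 1 = K / α := by
    rw [hexp]; field_simp; ring
  have hdenpos : (0 : ℝ) < Real.exp Δstar + K - 1 := by
    rw [hden]; positivity
  have hdenne : Real.exp Δstar + K - 1 ≠ 0 := ne_of_gt hdenpos
  refine ⟨?_, ?_, ?_⟩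
  · rw [hf, hden]
    have hα : α ≠ 0 := ne_of_gt hα0
    have hKne : (K : ℝ) ≠ 0 := ne_of_gt hKpos
    field_simp
    ring
  · have hg : HasDerivAt (fun Δ => Real.exp Δ + K - 1) (Real.exp Δstar) Δstar := by
      simpa [add_sub_assoc] using ((Real.hasDerivAt_exp Δstar).add_const ((K : ℝ) - 1))
    have hdiv : HasDerivAt (fun Δ => η * p * K / (Real.exp Δ + K - 1))
        ((0 * (Real.exp Δstar + K - 1) - η * p * K * Real.exp Δstar) /
          (Real.exp Δstar + K - 1) ^ 2) Δstar :=
      (hasDerivAt_const Δstar (η * p * K)).div hg hdenne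
    have hfull : HasDerivAt (fun Δ => Δ + η * p * K / (Real.exp Δ + K - 1) - α * η * p)
        (1 + (0 * (Real.exp Δstar + K - 1) - η * p * K * Real.exp Δstar) /
          (Real.exp Δstar + K - 1) ^ 2) Δstar :=
      ((hasDerivAt_id Δstar).add hdiv).sub_const (α * η * p)
    have heq : (1 : ℝ) + (0 * (Real.exp Δstar + K - 1) - η * p * K * Real.exp Δstar) /
          (Real.exp Δstar + K - 1) ^ 2 = 1 - η * p * α * (1 - α + α / K) := by
      rw [hden, hexp]
      have hα : α ≠ 0 := ne_of_gt hα0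
      have hKne : (K : ℝ) ≠ 0 := ne_of_gt hKpos
      field_simp
      ring
    have : HasDerivAt (fun Δ => Δ + η * p * K / (Real.exp Δ + K - 1) - α * η * p)
        (1 - η * p * α * (1 - α + α / K)) Δstar := heq ▸ hfull
    exact this.congr_of_eventuallyEq (Filter.Eventually.of_forall fun x => (hf x))
  · have hx : 0 < η * p * α * (1 - α + α / K) := by positivity
    rw [abs_lt]
    constructor
    · rintro ⟨h1, _⟩; linarith
    · intro h; exact ⟨by linarith, by linarith⟩
end

section
/- Let A, B, D be positive reals with A − B·D > D and A < 4·B, and let x* = log((A − B·D)/D). Define x : ℕ → ℝ by x_0 = 0 and x_{t+1} = x_t + A/(exp(x_t) + B) − D. If x_t ≤ x* for all t, then for all t, x* − x_t ≥ x* · (1 − A/(4·B))^t. -/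
open Real

lemma lip_aux (A B : ℝ) (hA : 0 < A) (hB : 0 < B) {u v : ℝ} (huv : u ≤ v) :
    A / (Real.exp u + B) - A / (Real.exp v + B) ≤ A / (4 * B) * (v - u) := by
  set f : ℝ → ℝ := fun x => A / (Real.exp x + B) with hf
  set f' : ℝ → ℝ := fun x => -(A * Real.exp x) / (Real.exp x + B) ^ 2 with hf'
  have hderiv : ∀ x ∈ (Set.univ : Set ℝ), HasDerivWithinAt f (f' x) Set.univ x := by
    intro x _
    have h1 : HasDerivAt (fun x => Real.exp x + B) (Real.exp x) x :=
      (Real.hasDerivAt_exp x).add_const B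
    have hne : Real.exp x + B ≠ 0 := by positivity
    have h2 := (hasDerivAt_const x A).div h1 hne
    have : (0 * (Real.exp x + B) - A * Real.exp x) / (Real.exp x + B) ^ 2 = f' x := by
      simp only [hf']; ring
    rw [this] at h2
    exact h2.hasDerivWithinAt
  have bound : ∀ x ∈ (Set.univ : Set ℝ), ‖f' x‖ ≤ A / (4 * B) := by
    intro x _
    have he : 0 < Real.exp x := Real.exp_pos x
    have hnorm : ‖f' x‖ = A * Real.exp x / (Real.exp x + B) ^ 2 := by
      rw [hf']
      rw [Real.norm_eq_abs, abs_div, abs_neg, abs_of_pos (by positivity),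
        abs_of_pos (by positivity)]
    rw [hnorm, div_le_div_iff₀ (by positivity) (by positivity)]
    nlinarith [sq_nonneg (Real.exp x - B)]
  have key := Convex.norm_image_sub_le_of_norm_hasDerivWithin_le hderiv bound convex_univ
    (Set.mem_univ u) (Set.mem_univ v)
  have h1 : f u - f v ≤ ‖f v - f u‖ := by
    rw [Real.norm_eq_abs]
    have := neg_abs_le (f v - f u)
    linarith
  have h2 : ‖v - u‖ = v - u := by
    rw [Real.norm_eq_abs, abs_of_nonneg (by linarith)]
  calc A / (Real.exp u + B) - A / (Real.exp v + B) = f u - f v := rfl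
    _ ≤ ‖f v - f u‖ := h1
    _ ≤ A / (4 * B) * ‖v - u‖ := key
    _ = A / (4 * B) * (v - u) := by rw [h2]

theorem stmt7 (A B D : ℝ) (hA : 0 < A) (hB : 0 < B) (hD : 0 < D)
    (h1 : D < A - B * D) (h2 : A < 4 * B)
    (xstar : ℝ) (hxstar : xstar = Real.log ((A - B * D) / D))
    (x : ℕ → ℝ) (h0 : x 0 = 0)
    (hrec : ∀ t, x (t + 1) = x t + A / (Real.exp (x t) + B) - D)
    (hle : ∀ t, x t ≤ xstar) :
    ∀ t, xstar * (1 - A / (4 * B)) ^ t ≤ xstar - x t := by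
  have hC : 0 < A / (4 * B) := by positivity
  have hq : 0 < 1 - A / (4 * B) := by
    rw [sub_pos, div_lt_one (by positivity)]; linarith
  have hv : (1 : ℝ) < (A - B * D) / D := by
    rw [lt_div_iff₀ hD]; linarith
  have hexp : Real.exp xstar = (A - B * D) / D := by
    rw [hxstar, Real.exp_log (by linarith)]
  have hsum : Real.exp xstar + B = A / D := by
    rw [hexp]; field_simp; ring
  have hDval : A / (Real.exp xstar + B) = D := by
    rw [hsum]; field_simp
  intro t
  induction t with
  | zero => simp [h0]
  | succ t ih =>
    have hlip := lip_aux A B hA hB (hle t)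
    rw [hDval] at hlip
    have hrec' := hrec t
    have : xstar * (1 - A / (4 * B)) ^ (t + 1)
        = (1 - A / (4 * B)) * (xstar * (1 - A / (4 * B)) ^ t) := by ring
    rw [this]
    have step : (1 - A / (4 * B)) * (xstar * (1 - A / (4 * B)) ^ t)
        ≤ (1 - A / (4 * B)) * (xstar - x t) :=
      mul_le_mul_of_nonneg_left ih (le_of_lt hq)
    have : (1 - A / (4 * B)) * (xstar - x t) ≤ xstar - x (t + 1) := by
      rw [hrec']
      nlinarith [hle t]
    linarith
end

section
/- Let β > 1 be a real constant. There exist constants c > 0 and t₀ ≥ 1 such that for every natural number M ≥ 1 and every real t with t₀ ≤ t ≤ M^β, one has ∑_{i=1}^{M} i^{−β} · exp(−i^{−β}·t) ≥ c · t^{−(1 − 1/β)}. -/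
open Real Finset

theorem stmt8 (β : ℝ) (hβ : 1 < β) :
    ∃ c : ℝ, 0 < c ∧ ∃ t₀ : ℝ, 1 ≤ t₀ ∧
      ∀ M : ℕ, 1 ≤ M → ∀ t : ℝ, t₀ ≤ t → t ≤ (M : ℝ) ^ β →
        c * t ^ (-(1 - 1 / β)) ≤
          ∑ i ∈ Finset.Icc 1 M, (i : ℝ) ^ (-β) * Real.exp (-(i : ℝ) ^ (-β) * t) := by
  have hβ0 : 0 < β := by linarith
  set E : ℝ := Real.exp (-(2:ℝ)^β) with hE
  have hE0 : 0 < E := Real.exp_pos _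
  refine ⟨E / 4, by positivity, (4:ℝ)^β, ?_, ?_⟩
  · exact Real.one_le_rpow (by norm_num) hβ0.le
  intro M hM t ht htM
  have ht0 : 0 < t := lt_of_lt_of_le (Real.rpow_pos_of_pos (by norm_num) β) ht
  set s : ℝ := t ^ (1/β) with hs
  have hs0 : 0 < s := Real.rpow_pos_of_pos ht0 _
  have hsβ : s ^ β = t := by
    rw [hs, ← Real.rpow_mul ht0.le, one_div_mul_cancel hβ0.ne', Real.rpow_one]
  have hs4 : 4 ≤ s := by
    have h := Real.rpow_le_rpow (by positivity) ht (by positivity : (0:ℝ) ≤ 1/β)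
    rwa [← Real.rpow_mul (by norm_num : (0:ℝ) ≤ 4), mul_one_div_cancel hβ0.ne',
      Real.rpow_one] at h
  have hsM : s ≤ (M : ℝ) := by
    have h := Real.rpow_le_rpow ht0.le htM (by positivity : (0:ℝ) ≤ 1/β)
    rwa [← Real.rpow_mul (by positivity), mul_one_div_cancel hβ0.ne',
      Real.rpow_one] at h
  set K : ℕ := ⌈s/2⌉₊ with hK
  set N : ℕ := ⌊s⌋₊ with hN
  have hKc : (K : ℝ) < s/2 + 1 := Nat.ceil_lt_add_one (by positivity)
  have hKc' : s/2 ≤ (K : ℝ) := Nat.le_ceil _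
  have hNc : (N : ℝ) ≤ s := Nat.floor_le hs0.le
  have hNc' : s - 1 < (N : ℝ) := by
    have := Nat.lt_floor_add_one s; linarith
  have hK1 : 1 ≤ K := Nat.ceil_pos.mpr (by positivity)
  have hKN : K ≤ N := by
    apply Nat.le_floor
    linarith
  have hNM : N ≤ M := by
    have := Nat.floor_le_floor hsM
    simpa using this
  -- each term in [K, N] is at least t⁻¹ * E
  have hterm : ∀ i ∈ Finset.Icc K N,
      t⁻¹ * E ≤ (i : ℝ) ^ (-β) * Real.exp (-(i : ℝ) ^ (-β) * t) := by
    intro i hi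
    rw [Finset.mem_Icc] at hi
    have hi_lo : s/2 ≤ (i : ℝ) := le_trans hKc' (Nat.cast_le.mpr hi.1)
    have hi_hi : (i : ℝ) ≤ s := le_trans (Nat.cast_le.mpr hi.2) hNc
    have hi0 : 0 < (i : ℝ) := lt_of_lt_of_le (by linarith) hi_lo
    have hβi : 0 < (i : ℝ) ^ β := Real.rpow_pos_of_pos hi0 _
    have h1 : (i : ℝ) ^ β ≤ t := by
      calc (i : ℝ) ^ β ≤ s ^ β := Real.rpow_le_rpow hi0.le hi_hi hβ0.le
        _ = t := hsβ
    have h2 : t / (2:ℝ)^β ≤ (i : ℝ) ^ β := by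
      have := Real.rpow_le_rpow (by positivity : (0:ℝ) ≤ s/2) hi_lo hβ0.le
      rwa [Real.div_rpow hs0.le (by norm_num), hsβ] at this
    have hneg : (i : ℝ) ^ (-β) = ((i : ℝ) ^ β)⁻¹ := Real.rpow_neg hi0.le β
    have h2β : (0:ℝ) < (2:ℝ)^β := Real.rpow_pos_of_pos (by norm_num) _
    have hlow : t⁻¹ ≤ (i : ℝ) ^ (-β) := by
      rw [hneg]; exact inv_anti₀ hβi h1
    have hup : (i : ℝ) ^ (-β) * t ≤ (2:ℝ)^β := by
      rw [hneg]
      have hinv : ((i : ℝ) ^ β)⁻¹ ≤ (t / (2:ℝ)^β)⁻¹ :=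
        inv_anti₀ (by positivity) h2
      calc ((i : ℝ) ^ β)⁻¹ * t ≤ (t / (2:ℝ)^β)⁻¹ * t :=
            mul_le_mul_of_nonneg_right hinv ht0.le
        _ = (2:ℝ)^β := by field_simp
    have hexp : E ≤ Real.exp (-(i : ℝ) ^ (-β) * t) := by
      rw [hE]
      apply Real.exp_le_exp.mpr
      nlinarith
    calc t⁻¹ * E ≤ (i : ℝ) ^ (-β) * E :=
          mul_le_mul_of_nonneg_right hlow hE0.le
      _ ≤ (i : ℝ) ^ (-β) * Real.exp (-(i : ℝ) ^ (-β) * t) :=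
          mul_le_mul_of_nonneg_left hexp (Real.rpow_nonneg hi0.le _)
  -- sum over Icc K N lower bounds the full sum
  have hsub : Finset.Icc K N ⊆ Finset.Icc 1 M := Finset.Icc_subset_Icc hK1 hNM
  have hsum1 : ∑ i ∈ Finset.Icc K N, (i : ℝ) ^ (-β) * Real.exp (-(i : ℝ) ^ (-β) * t)
      ≤ ∑ i ∈ Finset.Icc 1 M, (i : ℝ) ^ (-β) * Real.exp (-(i : ℝ) ^ (-β) * t) := by
    apply Finset.sum_le_sum_of_subset_of_nonneg hsub
    intro i _ _
    have : (0:ℝ) ≤ (i : ℝ) ^ (-β) := Real.rpow_nonneg (by positivity) _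
    positivity
  have hcard : (Finset.Icc K N).card = N + 1 - K := Nat.card_Icc K N
  have hcardR : s/4 ≤ ((Finset.Icc K N).card : ℝ) := by
    rw [hcard]
    have hle : K ≤ N + 1 := by omega
    push_cast [Nat.cast_sub hle]
    linarith
  have hsum2 : ((Finset.Icc K N).card : ℝ) * (t⁻¹ * E)
      ≤ ∑ i ∈ Finset.Icc K N, (i : ℝ) ^ (-β) * Real.exp (-(i : ℝ) ^ (-β) * t) := by
    have := Finset.card_nsmul_le_sum (Finset.Icc K N) _ _ hterm
    simpa [nsmul_eq_mul] using this
  have hpow : t ^ (-(1 - 1/β)) = s / t := by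
    rw [show -(1 - 1/β) = 1/β - 1 by ring, Real.rpow_sub ht0, Real.rpow_one, hs]
  rw [hpow]
  have hmain : E / 4 * (s / t) ≤ ((Finset.Icc K N).card : ℝ) * (t⁻¹ * E) := by
    have h1 : E / 4 * (s / t) = (s/4) * (t⁻¹ * E) := by field_simp
    rw [h1]
    exact mul_le_mul_of_nonneg_right hcardR (by positivity)
  linarith
end

section
/- Let 0 < A < 1 and let B > 0 satisfy B > log(A/(1−A)). Define g : ℝ → ℝ by g(x) = A·x + log(1 + A·(exp(−x) − 1)). Then for every x with 0 < x ≤ B, g(x) ≥ min( A·(1−A)/2 , g(B)/B² ) · x². -/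
open Real

/-- `g(x) = A·x + log(1 + A·(exp(−x) − 1))`, the excess cross-entropy risk at margin deficit `x`. -/
noncomputable def gFun (A x : ℝ) : ℝ := A * x + Real.log (1 + A * (Real.exp (-x) - 1))


noncomputable def pF (A x : ℝ) : ℝ :=
  A * (1 - A) * (1 - Real.exp (-x)) / (1 + A * (Real.exp (-x) - 1))

noncomputable def qF (A x : ℝ) : ℝ :=
  A * (1 - A) * Real.exp (-x) / (1 + A * (Real.exp (-x) - 1)) ^ 2

lemma denpos {A : ℝ} (hA0 : 0 < A) (hA1 : A < 1) (x : ℝ) :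
    0 < 1 + A * (Real.exp (-x) - 1) := by
  nlinarith [Real.exp_pos (-x)]

lemma denD (A x : ℝ) :
    HasDerivAt (fun y => 1 + A * (Real.exp (-y) - 1)) (A * -Real.exp (-x)) x := by
  have h : HasDerivAt (fun y : ℝ => Real.exp (-y)) (-Real.exp (-x)) x := by
    simpa using (hasDerivAt_neg x).exp
  simpa using ((h.sub_const 1).const_mul A).const_add 1

lemma gD {A : ℝ} (hA0 : 0 < A) (hA1 : A < 1) (x : ℝ) :
    HasDerivAt (gFun A) (pF A x) x := by
  have hd := denD A x
  have hne : 1 + A * (Real.exp (-x) - 1) ≠ 0 := (denpos hA0 hA1 x).ne'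
  have h := ((hasDerivAt_id x).const_mul A).add (hd.log hne)
  refine HasDerivAt.congr_deriv (f := gFun A) h ?_
  unfold pF; field_simp
  ring

lemma pD {A : ℝ} (hA0 : 0 < A) (hA1 : A < 1) (x : ℝ) :
    HasDerivAt (pF A) (qF A x) x := by
  have hd := denD A x
  have hne : 1 + A * (Real.exp (-x) - 1) ≠ 0 := (denpos hA0 hA1 x).ne'
  have hnum : HasDerivAt (fun y => A * (1 - A) * (1 - Real.exp (-y)))
      (A * (1 - A) * Real.exp (-x)) x := by
    have h : HasDerivAt (fun y : ℝ => Real.exp (-y)) (-Real.exp (-x)) x := by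
      simpa using (hasDerivAt_neg x).exp
    simpa using ((hasDerivAt_const x (1:ℝ)).sub h).const_mul (A * (1-A))
  have h := hnum.div hd hne
  refine HasDerivAt.congr_deriv (f := pF A) h ?_
  unfold qF; field_simp
  ring
lemma q_ge {A : ℝ} (hA0 : 0 < A) (hA1 : A < 1) {x : ℝ} (hx0 : 0 ≤ x)
    (hxm : x ≤ Real.log (A / (1 - A))) : A * (1 - A) ≤ qF A x := by
  have hA1' : 0 < 1 - A := by linarith
  set t := Real.exp (-x) with ht
  have ht1 : t ≤ 1 := Real.exp_le_one_iff.2 (by linarith)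
  have htlow : (1 - A) / A ≤ t := by
    have h1 : Real.exp (-Real.log (A / (1 - A))) ≤ t := Real.exp_le_exp.2 (by linarith)
    have h2 : Real.exp (-Real.log (A / (1 - A))) = (1 - A) / A := by
      rw [Real.exp_neg, Real.exp_log (by positivity)]
      field_simp
    linarith [h2 ▸ h1]
  have hAt : 1 - A ≤ A * t := by
    rw [div_le_iff₀ hA0] at htlow; linarith [htlow]
  have htpos : 0 < t := Real.exp_pos _
  have hAge : 1 - A ≤ A := by nlinarith
  have hkey : (1 - A) * (1 - A) ≤ A * (A * t) := by nlinarith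
  have hden := denpos hA0 hA1 x
  rw [← ht] at hden
  rw [qF, ← ht, le_div_iff₀ (by positivity)]
  nlinarith [mul_nonneg (sub_nonneg.2 ht1) (sub_nonneg.2 hkey), mul_pos hA0 hA1']

lemma q_anti {A : ℝ} (hA0 : 0 < A) (hA1 : A < 1) {x y : ℝ}
    (hx : Real.log (A / (1 - A)) ≤ x) (hxy : x ≤ y) : qF A y ≤ qF A x := by
  have hA1' : 0 < 1 - A := by linarith
  set t := Real.exp (-x) with ht
  set u := Real.exp (-y) with hu
  have htu : u ≤ t := Real.exp_le_exp.2 (by linarith)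
  have hupos : 0 < u := Real.exp_pos _
  have htpos : 0 < t := Real.exp_pos _
  have hAt : A * t ≤ 1 - A := by
    have h1 : t ≤ Real.exp (-Real.log (A / (1 - A))) := Real.exp_le_exp.2 (by linarith)
    have h2 : Real.exp (-Real.log (A / (1 - A))) = (1 - A) / A := by
      rw [Real.exp_neg, Real.exp_log (by positivity)]
      field_simp
    rw [h2] at h1
    rw [← le_div_iff₀' hA0]; exact h1
  have hAu : A * u ≤ 1 - A := by nlinarith
  have hkey : (A * u) * (A * t) ≤ (1 - A) * (1 - A) :=
    mul_le_mul hAu hAt (by positivity) (by linarith)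
  have hdx := denpos hA0 hA1 x
  have hdy := denpos hA0 hA1 y
  rw [← ht] at hdx
  rw [← hu] at hdy
  rw [qF, qF, ← ht, ← hu, div_le_div_iff₀ (by positivity) (by positivity)]
  nlinarith [mul_nonneg (sub_nonneg.2 htu) (sub_nonneg.2 hkey), mul_pos hA0 hA1']

lemma monoOn {f f' : ℝ → ℝ} (hf : ∀ x, HasDerivAt f (f' x) x) {a b : ℝ}
    (h : ∀ x ∈ Set.Icc a b, 0 ≤ f' x) : MonotoneOn f (Set.Icc a b) :=
  monotoneOn_of_deriv_nonneg (convex_Icc a b)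
    (fun x _ => (hf x).continuousAt.continuousWithinAt)
    (fun x _ => (hf x).differentiableAt.differentiableWithinAt)
    (fun x hx => by rw [(hf x).deriv]; exact h x (interior_subset hx))

lemma antiOn {f f' : ℝ → ℝ} (hf : ∀ x, HasDerivAt f (f' x) x) {a b : ℝ}
    (h : ∀ x ∈ Set.Icc a b, f' x ≤ 0) : AntitoneOn f (Set.Icc a b) :=
  antitoneOn_of_deriv_nonpos (convex_Icc a b)
    (fun x _ => (hf x).continuousAt.continuousWithinAt)
    (fun x _ => (hf x).differentiableAt.differentiableWithinAt)
    (fun x hx => by rw [(hf x).deriv]; exact h x (interior_subset hx))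

theorem stmt9 (A B : ℝ) (hA0 : 0 < A) (hA1 : A < 1) (hB : 0 < B)
    (hBlog : Real.log (A / (1 - A)) < B) :
    ∀ x : ℝ, 0 < x → x ≤ B →
      min (A * (1 - A) / 2) (gFun A B / B ^ 2) * x ^ 2 ≤ gFun A x := by
  intro x hx0 hxB
  set c : ℝ := min (A * (1 - A) / 2) (gFun A B / B ^ 2) with hcdef
  have hA1' : 0 < 1 - A := by linarith
  have hc1 : c ≤ A * (1 - A) / 2 := min_le_left _ _
  have hc2 : c * B ^ 2 ≤ gFun A B := by
    have h := min_le_right (A * (1 - A) / 2) (gFun A B / B ^ 2)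
    have hB2 : (0:ℝ) < B ^ 2 := by positivity
    calc c * B ^ 2 ≤ gFun A B / B ^ 2 * B ^ 2 :=
          mul_le_mul_of_nonneg_right h hB2.le
      _ = gFun A B := by field_simp
  have hg0 : gFun A 0 = 0 := by simp [gFun]
  have hp0 : pF A 0 = 0 := by simp [pF]
  have hq0 : qF A 0 = A * (1 - A) := by norm_num [qF]
  -- derivative setup for φ y = gFun A y - c y², ψ y = pF A y - 2 c y
  have hφ : ∀ y : ℝ, HasDerivAt (fun z => gFun A z - c * z ^ 2) (pF A y - 2 * c * y) y := by
    intro y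
    have h2 : HasDerivAt (fun z : ℝ => c * z ^ 2) (2 * c * y) y := by
      have := (hasDerivAt_pow 2 y).const_mul c
      refine this.congr_deriv ?_
      norm_num
      ring
    exact (gD hA0 hA1 y).sub h2
  have hψ : ∀ y : ℝ, HasDerivAt (fun z => pF A z - 2 * c * z) (qF A y - 2 * c) y := by
    intro y
    exact (pD hA0 hA1 y).sub (by simpa using (hasDerivAt_id y).const_mul (2 * c))
  set m : ℝ := max (Real.log (A / (1 - A))) 0 with hmdef
  have hm0 : 0 ≤ m := le_max_right _ _
  have hmB : m ≤ B := max_le hBlog.le hB.le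
  have hmlog : Real.log (A / (1 - A)) ≤ m := le_max_left _ _
  have hq_on : ∀ y ∈ Set.Icc (0:ℝ) m, 2 * c ≤ qF A y := by
    intro y hy
    by_cases hl : Real.log (A / (1 - A)) ≤ 0
    · have hm : m = 0 := max_eq_right hl
      have hy0 : y = 0 := le_antisymm (hm ▸ hy.2) hy.1
      rw [hy0, hq0]; linarith
    · have hm : m = Real.log (A / (1 - A)) := max_eq_left (le_of_not_ge hl)
      have := q_ge hA0 hA1 hy.1 (hm ▸ hy.2)
      linarith
  have hce : Continuous fun y : ℝ => Real.exp (-y) := Real.continuous_exp.comp continuous_neg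
  have hcq : Continuous (qF A) := by
    unfold qF
    exact Continuous.div (continuous_const.mul hce)
      ((continuous_const.add (continuous_const.mul (hce.sub continuous_const))).pow 2)
      (fun y => pow_ne_zero 2 (denpos hA0 hA1 y).ne')
  -- main claim: φ ≥ 0 on [0, B]
  have Hmain : ∀ y ∈ Set.Icc (0:ℝ) B, 0 ≤ gFun A y - c * y ^ 2 := by
    by_cases hqB : 2 * c ≤ qF A B
    · -- convex everywhere on [0, B]
      intro y hy
      have hψpos : ∀ z ∈ Set.Icc (0:ℝ) B, 0 ≤ qF A z - 2 * c := by
        intro z hz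
        rcases le_or_gt z m with h | h
        · linarith [hq_on z ⟨hz.1, h⟩]
        · linarith [q_anti hA0 hA1 (le_trans hmlog h.le) hz.2]
      have hψmono := monoOn hψ hψpos
      have hψge : ∀ z ∈ Set.Icc (0:ℝ) B, 0 ≤ pF A z - 2 * c * z := by
        intro z hz
        have := hψmono (Set.left_mem_Icc.2 (by linarith [hy.1, hB.le])) hz hz.1
        simpa [hp0] using this
      have hφmono := monoOn hφ hψge
      have := hφmono (Set.left_mem_Icc.2 hB.le) hy hy.1
      simpa [hg0] using this
    · -- IVT: find switching point s
      push_neg at hqB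
      have hqm : 2 * c ≤ qF A m := hq_on m ⟨hm0, le_refl m⟩
      obtain ⟨s, hsmem, hqs⟩ : ∃ s ∈ Set.Icc m B, qF A s = 2 * c := by
        have h := intermediate_value_Icc' hmB hcq.continuousOn
          (Set.mem_Icc.2 ⟨hqB.le, hqm⟩)
        obtain ⟨s, hs, heq⟩ := h
        exact ⟨s, hs, heq⟩
      have hs0 : 0 ≤ s := le_trans hm0 hsmem.1
      have hsB : s ≤ B := hsmem.2
      have hslog : Real.log (A / (1 - A)) ≤ s := le_trans hmlog hsmem.1
      -- φ ≥ 0 on [0, s]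
      have hψpos : ∀ z ∈ Set.Icc (0:ℝ) s, 0 ≤ qF A z - 2 * c := by
        intro z hz
        rcases le_or_gt z m with h | h
        · linarith [hq_on z ⟨hz.1, h⟩]
        · have := q_anti hA0 hA1 (le_trans hmlog h.le) hz.2
          linarith [hqs ▸ this]
      have hψmono := monoOn hψ hψpos
      have hψge : ∀ z ∈ Set.Icc (0:ℝ) s, 0 ≤ pF A z - 2 * c * z := by
        intro z hz
        have := hψmono (Set.left_mem_Icc.2 hs0) hz hz.1
        simpa [hp0] using this
      have hφmono := monoOn hφ hψge
      have hφ0s : ∀ z ∈ Set.Icc (0:ℝ) s, 0 ≤ gFun A z - c * z ^ 2 := by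
        intro z hz
        have := hφmono (Set.left_mem_Icc.2 hs0) hz hz.1
        simpa [hg0] using this
      have hφB : 0 ≤ gFun A B - c * B ^ 2 := by linarith
      -- ψ antitone on [s, B]
      have hψneg : ∀ z ∈ Set.Icc s B, qF A z - 2 * c ≤ 0 := by
        intro z hz
        have := q_anti hA0 hA1 hslog hz.1
        linarith [hqs ▸ this]
      have hψanti := antiOn hψ hψneg
      intro y hy
      rcases le_or_gt y s with h | h
      · exact hφ0s y ⟨hy.1, h⟩
      · by_cases hsign : 0 ≤ pF A y - 2 * c * y
        · -- ψ ≥ 0 on [s, y], so φ monotone there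
          have hge : ∀ z ∈ Set.Icc s y, 0 ≤ pF A z - 2 * c * z := by
            intro z hz
            have h2 : pF A y - 2 * c * y ≤ pF A z - 2 * c * z :=
              hψanti (Set.mem_Icc.2 ⟨hz.1, le_trans hz.2 hy.2⟩)
                (Set.mem_Icc.2 ⟨h.le, hy.2⟩) hz.2
            linarith
          have hmono := monoOn hφ hge
          have h2 : gFun A s - c * s ^ 2 ≤ gFun A y - c * y ^ 2 :=
            hmono (Set.left_mem_Icc.2 h.le) (Set.right_mem_Icc.2 h.le) h.le
          have hφs := hφ0s s (Set.right_mem_Icc.2 hs0)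
          linarith
        · push_neg at hsign
          have hle : ∀ z ∈ Set.Icc y B, pF A z - 2 * c * z ≤ 0 := by
            intro z hz
            have h2 : pF A z - 2 * c * z ≤ pF A y - 2 * c * y :=
              hψanti (Set.mem_Icc.2 ⟨h.le, hy.2⟩)
                (Set.mem_Icc.2 ⟨le_trans h.le hz.1, hz.2⟩) hz.1
            linarith
          have hanti := antiOn hφ hle
          have h2 : gFun A B - c * B ^ 2 ≤ gFun A y - c * y ^ 2 :=
            hanti (Set.left_mem_Icc.2 hy.2) (Set.right_mem_Icc.2 hy.2) hy.2
          linarith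
  have := Hmain x ⟨hx0.le, hxB⟩
  linarith
end

section
/- Let C, M ≥ 1 be natural numbers, a : Fin M → ℝ with a_i > 0 for all i, and b : Fin M → Fin M → ℝ. Let Q be the real square matrix indexed by Fin M × Fin C with entries Q_{(i,k),(j,l)} = b_{i,j} + (if i = j and k = l then a_i else 0). Assume Q is invertible. Then for every orthogonal matrix O and every positive semidefinite matrix S (both indexed by Fin M × Fin C) with Q = O·S, every entry of O − I has absolute value at most (M+1)/C. -/
open Matrix

lemma psd_eig {n : Type*} [Fintype n] {S : Matrix n n ℝ} (hS : S.PosSemidef)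
    {lam : ℝ} (hlam : 0 < lam) {v : n → ℝ} (hv : S *ᵥ (S *ᵥ v) = (lam ^ 2) • v) :
    S *ᵥ v = lam • v := by
  set w := S *ᵥ v - lam • v with hw
  have hSw : S *ᵥ w = -(lam • w) := by
    rw [hw, mulVec_sub, mulVec_smul, hv]
    funext i
    simp only [Pi.sub_apply, Pi.smul_apply, Pi.neg_apply, smul_eq_mul]
    ring
  have h1 : 0 ≤ w ⬝ᵥ (S *ᵥ w) := by simpa using hS.dotProduct_mulVec_nonneg w
  rw [hSw] at h1
  have hval : w ⬝ᵥ (-(lam • w)) = -(lam * (w ⬝ᵥ w)) := by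
    simp [dotProduct_neg, dotProduct_smul, smul_eq_mul]
  rw [hval] at h1
  have hww : 0 ≤ w ⬝ᵥ w := Finset.sum_nonneg fun i _ => mul_self_nonneg (w i)
  have h2 : w ⬝ᵥ w = 0 := by nlinarith
  have h3 : w = 0 := dotProduct_self_eq_zero.mp h2
  rw [hw] at h3
  exact sub_eq_zero.mp h3

lemma key_mulVec {M C : ℕ} (hC : 0 < C) (a : Fin M → ℝ) (β : Fin M → Fin M → ℝ)
    (R : Matrix (Fin M × Fin C) (Fin M × Fin C) ℝ)
    (hR : ∀ x z, R x z = β x.1 z.1 + if x = z then a x.1 else 0)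
    (y : Fin M × Fin C) :
    R *ᵥ (fun x => (if x = y then (1:ℝ) else 0) - if x.1 = y.1 then (C:ℝ)⁻¹ else 0)
      = a y.1 • fun x => (if x = y then (1:ℝ) else 0) - if x.1 = y.1 then (C:ℝ)⁻¹ else 0 := by
  have hCne : (C:ℝ) ≠ 0 := Nat.cast_ne_zero.mpr hC.ne'
  funext x
  simp only [mulVec, dotProduct, Pi.smul_apply, smul_eq_mul]
  have main : ∀ z : Fin M × Fin C,
      R x z * ((if z = y then (1:ℝ) else 0) - if z.1 = y.1 then (C:ℝ)⁻¹ else 0)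
      = β x.1 z.1 * ((if z = y then (1:ℝ) else 0) - if z.1 = y.1 then (C:ℝ)⁻¹ else 0)
        + (if x = z then a x.1 * ((if z = y then (1:ℝ) else 0)
            - if z.1 = y.1 then (C:ℝ)⁻¹ else 0) else 0) := by
    intro z
    rw [hR x z, add_mul, ite_mul, zero_mul]
  rw [Finset.sum_congr rfl fun z _ => main z, Finset.sum_add_distrib]
  have h2 : (∑ z : Fin M × Fin C, if x = z then a x.1 * ((if z = y then (1:ℝ) else 0)
      - if z.1 = y.1 then (C:ℝ)⁻¹ else 0) else 0)
      = a x.1 * ((if x = y then (1:ℝ) else 0) - if x.1 = y.1 then (C:ℝ)⁻¹ else 0) := by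
    simp
  have h1 : (∑ z : Fin M × Fin C, β x.1 z.1 * ((if z = y then (1:ℝ) else 0)
      - if z.1 = y.1 then (C:ℝ)⁻¹ else 0)) = 0 := by
    rw [Fintype.sum_prod_type]
    apply Finset.sum_eq_zero
    intro z1 _
    dsimp only
    rw [← Finset.mul_sum]
    apply mul_eq_zero_of_right
    rw [Finset.sum_sub_distrib]
    by_cases h : z1 = y.1
    · subst h
      have : (∑ z2 : Fin C, if (y.1, z2) = y then (1:ℝ) else 0) = 1 := by
        simp [Prod.ext_iff]
      rw [this]
      simp [Finset.sum_const, mul_inv_cancel₀ hCne, Finset.card_univ]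
    · simp [Prod.ext_iff, h]
  rw [h1, h2, zero_add]
  by_cases hxy : x.1 = y.1
  · rw [hxy]
  · have hne : x ≠ y := fun h => hxy (by rw [h])
    simp [hxy, hne]

theorem stmt12 (C M : ℕ) (hC : 1 ≤ C) (hM : 1 ≤ M)
    (a : Fin M → ℝ) (ha : ∀ i, 0 < a i) (b : Fin M → Fin M → ℝ)
    (Q : Matrix (Fin M × Fin C) (Fin M × Fin C) ℝ)
    (hQ : ∀ i k j l, Q (i, k) (j, l) = b i j + if i = j ∧ k = l then a i else 0)
    (hQinv : IsUnit Q)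
    (O S : Matrix (Fin M × Fin C) (Fin M × Fin C) ℝ)
    (hO : Oᵀ * O = 1) (hS : S.PosSemidef) (hQOS : Q = O * S) :
    ∀ x y, |(O - 1) x y| ≤ ((M : ℝ) + 1) / C := by
  intro x y
  have hC0 : 0 < C := hC
  have hCR : (0:ℝ) < C := by exact_mod_cast hC0
  set k0 : Fin C := ⟨0, hC⟩ with hk0
  set v : (Fin M × Fin C) → (Fin M × Fin C) → ℝ :=
    fun y' x' => (if x' = y' then (1:ℝ) else 0) - if x'.1 = y'.1 then (C:ℝ)⁻¹ else 0 with hvdef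
  -- Q and Qᵀ act on v as scalars
  have hRQ : ∀ x' z, Q x' z = b x'.1 z.1 + if x' = z then a x'.1 else 0 := by
    intro x' z
    simpa [Prod.ext_iff] using hQ x'.1 x'.2 z.1 z.2
  have hRQT : ∀ x' z, Qᵀ x' z = b z.1 x'.1 + if x' = z then a x'.1 else 0 := by
    intro x' z
    rw [transpose_apply, hRQ z x']
    rcases eq_or_ne x' z with h | h
    · subst h; simp
    · rw [if_neg (fun hh => h hh.symm), if_neg h]
  have hQv : ∀ y', Q *ᵥ v y' = a y'.1 • v y' := fun y' => key_mulVec hC0 a b Q hRQ y'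
  have hQTv : ∀ y', Qᵀ *ᵥ v y' = a y'.1 • v y' :=
    fun y' => key_mulVec hC0 a (fun i j => b j i) Qᵀ hRQT y'
  have hSS : S * S = Qᵀ * Q := by
    have h1 : Sᵀ = S := by
      rw [← conjTranspose_eq_transpose_of_trivial]; exact hS.1
    calc S * S = Sᵀ * (Oᵀ * O) * S := by rw [hO, h1, mul_one]
    _ = (O * S)ᵀ * (O * S) := by rw [transpose_mul]; noncomm_ring
    _ = Qᵀ * Q := by rw [← hQOS]
  have hSv : ∀ y', S *ᵥ v y' = a y'.1 • v y' := by
    intro y'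
    apply psd_eig hS (ha y'.1)
    rw [mulVec_mulVec, hSS, ← mulVec_mulVec, hQv, mulVec_smul, hQTv, smul_smul, ← sq]
  have hOv : ∀ y', O *ᵥ v y' = v y' := by
    intro y'
    have h1 : a y'.1 • (O *ᵥ v y') = a y'.1 • v y' := by
      calc a y'.1 • (O *ᵥ v y') = O *ᵥ (a y'.1 • v y') := (mulVec_smul O _ _).symm
      _ = O *ᵥ (S *ᵥ v y') := by rw [hSv]
      _ = (O * S) *ᵥ v y' := by rw [mulVec_mulVec]
      _ = Q *ᵥ v y' := by rw [← hQOS]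
      _ = a y'.1 • v y' := hQv y'
    exact smul_right_injective _ (ha y'.1).ne' h1
  -- matrix identities for the projection P
  set P : Matrix (Fin M × Fin C) (Fin M × Fin C) ℝ :=
    Matrix.of (fun x' y' => if x'.1 = y'.1 then (C:ℝ)⁻¹ else 0) with hPdef
  have h1P : ∀ y' x', (1 - P) x' y' = v y' x' := by
    intro y' x'
    simp [hPdef, hvdef, one_apply, Matrix.sub_apply]
  have hO1P : O * (1 - P) = 1 - P := by
    ext x' y'
    rw [mul_apply]
    have step : ∑ z, O x' z * (1 - P) z y' = (O *ᵥ v y') x' := by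
      simp only [mulVec, dotProduct]
      exact Finset.sum_congr rfl fun z _ => by rw [h1P]
    rw [step, hOv, ← h1P]
  have hPsymm : (1 - P)ᵀ = 1 - P := by
    ext x' y'
    simp only [transpose_apply, Matrix.sub_apply, one_apply, hPdef, of_apply]
    have e1 : (if y' = x' then (1:ℝ) else 0) = if x' = y' then 1 else 0 := by
      by_cases h : x' = y'
      · rw [if_pos h, if_pos h.symm]
      · rw [if_neg (fun hh => h hh.symm), if_neg h]
    have e2 : (if y'.1 = x'.1 then (C:ℝ)⁻¹ else 0) = if x'.1 = y'.1 then (C:ℝ)⁻¹ else 0 := by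
      by_cases h : x'.1 = y'.1
      · rw [if_pos h, if_pos h.symm]
      · rw [if_neg (fun hh => h hh.symm), if_neg h]
    rw [e1, e2]
  have h1PO : (1 - P) * O = 1 - P := by
    have ht := congrArg Matrix.transpose hO1P
    rw [transpose_mul, hPsymm] at ht
    calc (1 - P) * O = ((1 - P) * Oᵀ) * O := by rw [ht]
    _ = (1 - P) * (Oᵀ * O) := by rw [mul_assoc]
    _ = 1 - P := by rw [hO, mul_one]
  have hEP : O - 1 = P * (O - 1) * P := by
    have e1 : (O - 1) * P = O - 1 := by
      have h0 : (O - 1) * (1 - P) = 0 := by rw [sub_mul, hO1P, one_mul, sub_self]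
      rw [mul_sub, mul_one] at h0
      linear_combination (norm := noncomm_ring) -h0
    have e2 : P * (O - 1) = O - 1 := by
      have h0 : (1 - P) * (O - 1) = 0 := by rw [mul_sub, h1PO, mul_one, sub_self]
      rw [sub_mul, one_mul] at h0
      linear_combination (norm := noncomm_ring) -h0
    rw [e2, e1]
  set c : Fin M → Fin M → ℝ := fun i j => (O - 1) (i, k0) (j, k0) with hcdef
  have hEc : ∀ z w : Fin M × Fin C, (O - 1) z w = c z.1 w.1 := by
    intro z w
    show (O - 1) z w = (O - 1) (z.1, k0) (w.1, k0)
    rw [hEP]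
    rfl
  have hOz : ∀ (i : Fin M) (z : Fin M × Fin C),
      O z (i, k0) = (if z = (i, k0) then (1:ℝ) else 0) + c z.1 i := by
    intro i z
    have h := hEc z (i, k0)
    rw [Matrix.sub_apply, one_apply] at h
    linarith [h]
  have horth : ∀ i : Fin M, 2 * c i i + (C:ℝ) * ∑ m, (c m i)^2 = 0 := by
    intro i
    have h := congrFun (congrFun hO (i, k0)) (i, k0)
    rw [mul_apply, one_apply_eq] at h
    have hsum : ∑ z : Fin M × Fin C, Oᵀ (i, k0) z * O z (i, k0)
        = 1 + 2 * c i i + (C:ℝ) * ∑ m, (c m i)^2 := by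
      have e : ∀ z : Fin M × Fin C, Oᵀ (i, k0) z * O z (i, k0)
          = (if z = (i, k0) then (1:ℝ) else 0) * (if z = (i, k0) then (1:ℝ) else 0)
            + 2 * ((if z = (i, k0) then (1:ℝ) else 0) * c z.1 i)
            + c z.1 i * c z.1 i := by
        intro z
        rw [transpose_apply, hOz i z]
        ring
      rw [Finset.sum_congr rfl fun z _ => e z, Finset.sum_add_distrib,
        Finset.sum_add_distrib]
      have s1 : ∑ z : Fin M × Fin C, (if z = (i, k0) then (1:ℝ) else 0)
          * (if z = (i, k0) then (1:ℝ) else 0) = 1 := by simp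
      have s2 : ∑ z : Fin M × Fin C, 2 * ((if z = (i, k0) then (1:ℝ) else 0) * c z.1 i)
          = 2 * c i i := by
        rw [← Finset.mul_sum]
        congr 1
        rw [Finset.sum_congr rfl (fun z _ => ite_mul (z = (i,k0)) (1:ℝ) 0 (c z.1 i))]
        simp
      have s3 : ∑ z : Fin M × Fin C, c z.1 i * c z.1 i = (C:ℝ) * ∑ m, (c m i)^2 := by
        rw [Fintype.sum_prod_type]
        rw [Finset.mul_sum]
        apply Finset.sum_congr rfl
        intro m _
        dsimp only
        rw [Finset.sum_const, Finset.card_univ, Fintype.card_fin, nsmul_eq_mul, ← pow_two]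
      rw [s1, s2, s3]
    rw [hsum] at h
    linarith [h]
  -- final bound
  have hrel := horth y.1
  have hs_ii : (c y.1 y.1)^2 ≤ ∑ m, (c m y.1)^2 :=
    Finset.single_le_sum (f := fun m => (c m y.1)^2) (fun m _ => sq_nonneg _) (Finset.mem_univ y.1)
  have hs_ji : (c x.1 y.1)^2 ≤ ∑ m, (c m y.1)^2 :=
    Finset.single_le_sum (f := fun m => (c m y.1)^2) (fun m _ => sq_nonneg _) (Finset.mem_univ x.1)
  have hsnn : (0:ℝ) ≤ ∑ m, (c m y.1)^2 := Finset.sum_nonneg fun m _ => sq_nonneg _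
  have hu_np : c y.1 y.1 ≤ 0 := by
    nlinarith [mul_nonneg hCR.le hsnn]
  have hu2 : (C:ℝ) * (c y.1 y.1)^2 ≤ -2 * c y.1 y.1 := by
    have h' := mul_le_mul_of_nonneg_left hs_ii hCR.le
    linarith
  have h2 : (C:ℝ) * (-c y.1 y.1) ≤ 2 := by
    rcases eq_or_lt_of_le hu_np with h | h
    · rw [h]; norm_num
    · have hw : 0 < -c y.1 y.1 := by linarith
      nlinarith [hu2, hw]
  have hCs : (C:ℝ) * (∑ m, (c m y.1)^2) = -2 * c y.1 y.1 := by linarith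
  have e2 : (C:ℝ)^2 * (∑ m, (c m y.1)^2) ≤ 4 := by
    have e3 : (C:ℝ)^2 * (∑ m, (c m y.1)^2) = 2 * ((C:ℝ) * (-c y.1 y.1)) := by
      rw [pow_two, mul_assoc, hCs]; ring
    rw [e3]; linarith
  have ht2 : ((C:ℝ) * c x.1 y.1)^2 ≤ 4 := by
    have e1 : (C:ℝ)^2 * (c x.1 y.1)^2 ≤ (C:ℝ)^2 * ∑ m, (c m y.1)^2 :=
      mul_le_mul_of_nonneg_left hs_ji (sq_nonneg _)
    calc ((C:ℝ) * c x.1 y.1)^2 = (C:ℝ)^2 * (c x.1 y.1)^2 := by ring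
    _ ≤ (C:ℝ)^2 * ∑ m, (c m y.1)^2 := e1
    _ ≤ 4 := e2
  have htabs : |(C:ℝ) * c x.1 y.1| ≤ 2 := by
    rw [abs_le]
    constructor <;> nlinarith [ht2]
  have hbound : |c x.1 y.1| ≤ 2 / C := by
    rw [le_div_iff₀ hCR]
    calc |c x.1 y.1| * (C:ℝ) = |(C:ℝ) * c x.1 y.1| := by
          rw [abs_mul, abs_of_pos hCR]; ring
    _ ≤ 2 := htabs
  have hfin : (2:ℝ) / C ≤ ((M:ℝ) + 1) / C := by
    have h1 : (1:ℝ) ≤ (M:ℝ) := by exact_mod_cast hM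
    exact (div_le_div_iff_of_pos_right hCR).mpr (by linarith)
  calc |(O - 1) x y| = |c x.1 y.1| := by rw [hEc x y]
  _ ≤ 2 / C := hbound
  _ ≤ ((M:ℝ) + 1) / C := hfin
end

section
/- Let C, M ≥ 1 be natural numbers, a : Fin M → ℝ with a_i ≠ 0 for all i, and b : Fin M → Fin M → ℝ. Let Q be the real square matrix indexed by Fin M × Fin C with entries Q_{(i,k),(j,l)} = b_{i,j} + (if i = j and k = l then a_i else 0), and let D be the matrix with D_{(i,k),(j,l)} = sign(a_i) if i = j and k = l, and 0 otherwise. Assume Q is invertible. Then for every orthogonal matrix O and every positive semidefinite matrix S with Q = O·S, every entry of O − D has absolute value at most (M+1)/C. -/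
open Matrix Kronecker

private lemma kron_conjT {m n : Type*} [Fintype m] [Fintype n]
    (A : Matrix m m ℝ) (B : Matrix n n ℝ) : (A ⊗ₖ B)ᴴ = Aᴴ ⊗ₖ Bᴴ := by
  ext ⟨i, k⟩ ⟨j, l⟩
  simp [conjTranspose_apply, kroneckerMap_apply]

private lemma kron_psd {m n : Type*} [Fintype m] [Fintype n] [DecidableEq m] [DecidableEq n]
    {A : Matrix m m ℝ} {B : Matrix n n ℝ}
    (hA : A.PosSemidef) (hB : B.PosSemidef) : (A ⊗ₖ B).PosSemidef := by
  exact hA.kronecker hB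

theorem stmt13 (C M : ℕ) (hC : 1 ≤ C) (hM : 1 ≤ M)
    (a : Fin M → ℝ) (ha : ∀ i, a i ≠ 0) (b : Fin M → Fin M → ℝ)
    (Q : Matrix (Fin M × Fin C) (Fin M × Fin C) ℝ)
    (hQ : ∀ i k j l, Q (i, k) (j, l) = b i j + if i = j ∧ k = l then a i else 0)
    (D : Matrix (Fin M × Fin C) (Fin M × Fin C) ℝ)
    (hD : ∀ i k j l, D (i, k) (j, l) = if i = j ∧ k = l then Real.sign (a i) else 0)
    (hQinv : IsUnit Q)
    (O S : Matrix (Fin M × Fin C) (Fin M × Fin C) ℝ)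
    (hO : Oᵀ * O = 1) (hS : S.PosSemidef) (hQOS : Q = O * S) :
    ∀ x y, |(O - D) x y| ≤ ((M : ℝ) + 1) / C := by
  classical
  have hC0 : (C : ℝ) ≠ 0 := Nat.cast_ne_zero.mpr (by omega)
  have hCpos : (0 : ℝ) < C := by
    have : (0 : ℕ) < C := by omega
    exact_mod_cast this
  -- small C × C blocks
  set Pc : Matrix (Fin C) (Fin C) ℝ := of (fun _ _ => (C : ℝ)⁻¹) with hPcdef
  set Kc : Matrix (Fin C) (Fin C) ℝ := 1 - Pc with hKcdef
  have hPcH : Pcᴴ = Pc := by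
    ext k l; simp [hPcdef, conjTranspose_apply]
  have hPcPc : Pc * Pc = Pc := by
    ext k l
    simp only [hPcdef, Matrix.mul_apply, of_apply, Finset.sum_const, Finset.card_univ,
      Fintype.card_fin, nsmul_eq_mul]
    field_simp
  have hKcH : Kcᴴ = Kc := by
    rw [hKcdef, conjTranspose_sub, hPcH]; simp
  have hPcKc : Pc * Kc = 0 := by
    rw [hKcdef, mul_sub, mul_one, hPcPc, sub_self]
  have hKcPc : Kc * Pc = 0 := by
    rw [hKcdef, sub_mul, one_mul, hPcPc, sub_self]
  have hKcKc : Kc * Kc = Kc := by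
    nth_rewrite 1 [hKcdef]
    rw [sub_mul, one_mul, hPcKc, sub_zero]
  have hKcaddPc : Kc + Pc = 1 := by rw [hKcdef]; abel
  have hPcPSD : Pc.PosSemidef := by
    have h := posSemidef_conjTranspose_mul_self Pc
    rwa [hPcH, hPcPc] at h
  have hKcPSD : Kc.PosSemidef := by
    have h := posSemidef_conjTranspose_mul_self Kc
    rwa [hKcH, hKcKc] at h
  -- small M × M blocks
  set Dt : Matrix (Fin M) (Fin M) ℝ := diagonal (fun i => Real.sign (a i)) with hDtdef
  set At : Matrix (Fin M) (Fin M) ℝ := diagonal a with hAtdef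
  set Ab : Matrix (Fin M) (Fin M) ℝ := diagonal (fun i => |a i|) with hAbdef
  set Qt : Matrix (Fin M) (Fin M) ℝ := diagonal a + (C : ℝ) • of b with hQtdef
  have hsign : ∀ i, Real.sign (a i) * Real.sign (a i) = 1 := by
    intro i
    rcases (ha i).lt_or_gt with h | h
    · rw [Real.sign_of_neg h]; norm_num
    · rw [Real.sign_of_pos h]; norm_num
  have habsign : ∀ i, |Real.sign (a i)| = 1 := by
    intro i
    rcases (ha i).lt_or_gt with h | h
    · rw [Real.sign_of_neg h]; norm_num
    · rw [Real.sign_of_pos h]; norm_num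
  have hDtDt : Dt * Dt = 1 := by
    rw [hDtdef, diagonal_mul_diagonal]
    have : (fun i => Real.sign (a i) * Real.sign (a i)) = fun _ => (1 : ℝ) := by
      funext i; exact hsign i
    rw [this, diagonal_one]
  have hDtAb : Dt * Ab = At := by
    rw [hDtdef, hAbdef, hAtdef, diagonal_mul_diagonal]
    have e : (fun i => Real.sign (a i) * |a i|) = a := by
      funext i
      rcases (ha i).lt_or_gt with h | h
      · rw [Real.sign_of_neg h, abs_of_neg h]; ring
      · rw [Real.sign_of_pos h, abs_of_pos h]; ring
    rw [e]
  have hDtH : Dtᴴ = Dt := by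
    rw [hDtdef, diagonal_conjTranspose]
    congr 1
  have hQdet : Q.det ≠ 0 := by
    have := (Matrix.isUnit_iff_isUnit_det Q).mp hQinv
    exact this.ne_zero
  -- Qt is invertible
  have hQtdet : IsUnit Qt.det := by
    rw [isUnit_iff_ne_zero]
    intro h0
    obtain ⟨v, hv, hv0⟩ := (Matrix.exists_mulVec_eq_zero_iff).mpr h0
    set w : Fin M × Fin C → ℝ := fun p => v p.1 with hwdef
    have hQw : Q *ᵥ w = 0 := by
      funext x
      obtain ⟨i, k⟩ := x
      have key : (Q *ᵥ w) (i, k) = (Qt *ᵥ v) i := by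
        have h1 : ∀ j : Fin M, ∑ l : Fin C, Q (i, k) (j, l) * v j
            = (C : ℝ) * (b i j * v j) + (if i = j then a i * v j else 0) := by
          intro j
          simp only [hQ, add_mul, Finset.sum_add_distrib, Finset.sum_const,
            Finset.card_univ, Fintype.card_fin, nsmul_eq_mul, ite_mul, zero_mul]
          congr 1
          by_cases hij : i = j
          · subst hij
            simp
          · have : ∀ l : Fin C, ¬(i = j ∧ k = l) := fun l h => hij h.1
            simp [this, hij]
        have h2 : (Q *ᵥ w) (i, k)
            = ∑ j, ((C : ℝ) * (b i j * v j) + (if i = j then a i * v j else 0)) := by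
          simp only [Matrix.mulVec, dotProduct, Fintype.sum_prod_type, hwdef]
          exact Finset.sum_congr rfl (fun j _ => h1 j)
        have h3 : (Qt *ᵥ v) i = a i * v i + (C : ℝ) * ∑ j, b i j * v j := by
          rw [hQtdef, Matrix.add_mulVec, Matrix.smul_mulVec]
          simp [Matrix.mulVec, dotProduct, Matrix.diagonal_apply, ite_mul, zero_mul,
            Finset.sum_ite_eq]
        rw [h2, h3, Finset.sum_add_distrib, Finset.mul_sum]
        simp only [Finset.sum_ite_eq, Finset.mem_univ, if_pos]
        exact add_comm _ _
      rw [key, hv0]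
      simp
    have hw0 : w ≠ 0 := by
      intro hww
      apply hv
      funext i
      have := congrFun hww (i, ⟨0, by omega⟩)
      simpa [hwdef] using this
    exact hQdet ((Matrix.exists_mulVec_eq_zero_iff).mp ⟨w, hw0, hQw⟩)
  -- square root of Qtᴴ * Qt
  have hQtQt : (Qtᴴ * Qt).PosSemidef := posSemidef_conjTranspose_mul_self Qt
  set St : Matrix (Fin M) (Fin M) ℝ := open scoped MatrixOrder in CFC.sqrt (Qtᴴ * Qt) with hStdef
  have hStPSD : St.PosSemidef := by open scoped MatrixOrder in exact (CFC.sqrt_nonneg (Qtᴴ * Qt)).posSemidef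
  have hStSt : St * St = Qtᴴ * Qt := by open scoped MatrixOrder in exact CFC.sqrt_mul_sqrt_self (Qtᴴ * Qt) hQtQt.nonneg
  have hStH : Stᴴ = St := hStPSD.isHermitian
  have hStdet : IsUnit St.det := by
    rw [isUnit_iff_ne_zero]
    intro h0
    have h1 : St.det * St.det = Qtᴴ.det * Qt.det := by
      rw [← det_mul, ← det_mul, hStSt]
    rw [h0, mul_zero] at h1
    have h2 : Qtᴴ.det ≠ 0 := by
      rw [det_conjTranspose]
      simpa using hQtdet.ne_zero
    exact (mul_ne_zero h2 hQtdet.ne_zero) h1.symm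
  set Ot : Matrix (Fin M) (Fin M) ℝ := Qt * St⁻¹ with hOtdef
  have hOtSt : Ot * St = Qt := by
    rw [hOtdef, mul_assoc, Matrix.nonsing_inv_mul St hStdet, mul_one]
  have hOtH : Otᴴ * Ot = 1 := by
    have h1 : Otᴴ = St⁻¹ * Qtᴴ := by
      rw [hOtdef, conjTranspose_mul, conjTranspose_nonsing_inv, hStH]
    rw [h1, hOtdef, mul_assoc, ← mul_assoc Qtᴴ, ← hStSt, mul_assoc St,
      Matrix.mul_nonsing_inv St hStdet, mul_one, Matrix.nonsing_inv_mul St hStdet]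
  have hOtbd : ∀ i j, |Ot i j| ≤ 1 := by
    intro i j
    have h1 : ∑ i', Ot i' j * Ot i' j = 1 := by
      have h := congrFun (congrFun hOtH j) j
      simpa [Matrix.mul_apply, conjTranspose_apply, Matrix.one_apply] using h
    have h2 : Ot i j * Ot i j ≤ 1 := by
      rw [← h1]
      exact Finset.single_le_sum (fun i' _ => mul_self_nonneg (Ot i' j)) (Finset.mem_univ i)
    exact abs_le_one_iff_mul_self_le_one.mpr h2
  -- Kronecker structure of Q
  have hQk : Q = At ⊗ₖ Kc + Qt ⊗ₖ Pc := by
    ext x y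
    obtain ⟨i, k⟩ := x
    obtain ⟨j, l⟩ := y
    rw [hQ]
    simp only [hAtdef, hQtdef, hKcdef, hPcdef, Matrix.add_apply, kroneckerMap_apply,
      diagonal_apply, Matrix.sub_apply, Matrix.one_apply, of_apply, Matrix.smul_apply,
      smul_eq_mul]
    by_cases hij : i = j
    · subst hij
      by_cases hkl : k = l
      · subst hkl
        rw [if_pos (show i = i ∧ k = k from ⟨rfl, rfl⟩), if_pos (rfl : i = i),
          if_pos (rfl : k = k)]
        field_simp
        ring
      · rw [if_neg (show ¬(i = i ∧ k = l) from fun h => hkl h.2), if_pos (rfl : i = i),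
          if_neg hkl]
        field_simp
        ring
    · rw [if_neg (show ¬(i = j ∧ k = l) from fun h => hij h.1), if_neg hij]
      field_simp
      ring
  -- the explicit polar factors
  set O₀ : Matrix (Fin M × Fin C) (Fin M × Fin C) ℝ := Dt ⊗ₖ Kc + Ot ⊗ₖ Pc with hO₀def
  set S₀ : Matrix (Fin M × Fin C) (Fin M × Fin C) ℝ := Ab ⊗ₖ Kc + St ⊗ₖ Pc with hS₀def
  have hO₀H : O₀ᴴ * O₀ = 1 := by
    have e : O₀ᴴ = Dt ⊗ₖ Kc + Otᴴ ⊗ₖ Pc := by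
      rw [hO₀def, conjTranspose_add, kron_conjT, kron_conjT, hDtH, hKcH, hPcH]
    rw [e, hO₀def, add_mul, mul_add, mul_add, ← mul_kronecker_mul, ← mul_kronecker_mul,
      ← mul_kronecker_mul, ← mul_kronecker_mul, hDtDt, hKcKc, hKcPc, hPcKc, hPcPc, hOtH,
      kronecker_zero, kronecker_zero, add_zero, zero_add, ← kronecker_add, hKcaddPc,
      one_kronecker_one]
  have hS₀PSD : S₀.PosSemidef := by
    rw [hS₀def]
    have h1 : Ab.PosSemidef := by
      rw [hAbdef]
      exact Matrix.PosSemidef.diagonal (fun i => abs_nonneg (a i))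
    exact (kron_psd h1 hKcPSD).add (kron_psd hStPSD hPcPSD)
  have hO₀S₀ : O₀ * S₀ = Q := by
    rw [hO₀def, hS₀def, add_mul, mul_add, mul_add, ← mul_kronecker_mul, ← mul_kronecker_mul,
      ← mul_kronecker_mul, ← mul_kronecker_mul, hDtAb, hKcKc, hKcPc, hPcKc, hPcPc, hOtSt,
      kronecker_zero, kronecker_zero, add_zero, zero_add, ← hQk]
  -- uniqueness of the polar decomposition
  have hOH : Oᴴ * O = 1 := by
    have : Oᴴ = Oᵀ := by ext i j; simp [conjTranspose_apply]
    rw [this, hO]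
  have hSH : Sᴴ = S := hS.isHermitian
  have hSsq : S * S = Qᴴ * Q := by
    rw [hQOS, conjTranspose_mul, mul_assoc, ← mul_assoc Oᴴ, hOH, one_mul, hSH]
  have hS₀H : S₀ᴴ = S₀ := hS₀PSD.isHermitian
  have hS₀sq : S₀ * S₀ = Qᴴ * Q := by
    rw [← hO₀S₀, conjTranspose_mul, mul_assoc, ← mul_assoc O₀ᴴ, hO₀H, one_mul, hS₀H]
  have hSS₀ : S = S₀ := open scoped MatrixOrder in (CFC.sq_eq_sq_iff S S₀ hS.nonneg hS₀PSD.nonneg).mp (by rw [pow_two, pow_two, hSsq, hS₀sq])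
  have hSdet : IsUnit S.det := by
    rw [isUnit_iff_ne_zero]
    intro h0
    have h1 : S.det * S.det = Qᴴ.det * Q.det := by
      rw [← det_mul, ← det_mul, hSsq]
    rw [h0, mul_zero] at h1
    have h2 : Qᴴ.det ≠ 0 := by
      rw [det_conjTranspose]
      simpa using hQdet
    exact (mul_ne_zero h2 hQdet) h1.symm
  have hOO₀ : O = O₀ := by
    have h1 : O * S = O₀ * S := by rw [← hQOS, hSS₀, hO₀S₀]
    have h2 := congrArg (fun X => X * S⁻¹) h1
    simpa [Matrix.mul_nonsing_inv_cancel_right _ _ hSdet] using h2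
  -- the entrywise bound
  intro x y
  obtain ⟨i, k⟩ := x
  obtain ⟨j, l⟩ := y
  have hentry : (O - D) (i, k) (j, l)
      = Ot i j * (C : ℝ)⁻¹ - (if i = j then Real.sign (a i) * (C : ℝ)⁻¹ else 0) := by
    rw [Matrix.sub_apply, hOO₀, hO₀def, hD]
    simp only [Matrix.add_apply, kroneckerMap_apply, hKcdef, hPcdef, Matrix.sub_apply,
      Matrix.one_apply, of_apply, hDtdef, diagonal_apply]
    by_cases hij : i = j
    · subst hij
      by_cases hkl : k = l
      · subst hkl
        simp only [and_self, if_true, eq_self_iff_true]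
        ring
      · simp only [hkl, and_false, if_false, eq_self_iff_true, if_true]
        ring
    · simp only [hij, false_and, if_false]
      ring
  rw [hentry]
  have hb1 : |Ot i j * (C : ℝ)⁻¹| ≤ (C : ℝ)⁻¹ := by
    rw [abs_mul, abs_inv, Nat.abs_cast]
    calc |Ot i j| * (C : ℝ)⁻¹ ≤ 1 * (C : ℝ)⁻¹ := by
          apply mul_le_mul_of_nonneg_right (hOtbd i j)
          positivity
      _ = (C : ℝ)⁻¹ := one_mul _
  have hb2 : |(if i = j then Real.sign (a i) * (C : ℝ)⁻¹ else 0)| ≤ (C : ℝ)⁻¹ := by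
    by_cases hij : i = j
    · rw [if_pos hij, abs_mul, habsign, one_mul, abs_inv, Nat.abs_cast]
    · rw [if_neg hij, abs_zero]
      positivity
  have htri := abs_sub (Ot i j * (C : ℝ)⁻¹) (if i = j then Real.sign (a i) * (C : ℝ)⁻¹ else 0)
  have hM1 : (1 : ℝ) ≤ (M : ℝ) := by exact_mod_cast hM
  have h2C : 2 * (C : ℝ)⁻¹ ≤ ((M : ℝ) + 1) / C := by
    rw [div_eq_mul_inv]
    apply mul_le_mul_of_nonneg_right (by linarith)
    positivity
  linarith
end

section
/- Let K ≥ 2 and c ∈ ℝ, and let W = c · Ẽ·(2·I_K − J_K)·Eᵀ, where I_K is the identity and J_K the all-ones K×K matrix. Then the noiseless cross-entropy loss satisfies L(W) = log(1 + (K−1)·exp(−2c)); in particular, L(c·Ẽ(2I_K − J_K)Eᵀ) → 0 as c → ∞. -/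
open Matrix Real Filter

/-- The K×K all-ones matrix `J_K`. -/
def allOnes (K : ℕ) : Matrix (Fin K) (Fin K) ℝ := Matrix.of fun _ _ => (1 : ℝ)

theorem stmt15 {K : ℕ} (hK : 2 ≤ K)
    (E Et : Matrix (Fin K) (Fin K) ℝ)
    (hE : Eᵀ * E = 1) (hEt : Etᵀ * Et = 1)
    (p : Fin K → ℝ) (hp : ∀ j, 0 < p j) (hp1 : ∑ j, p j = 1) :
    (∀ c : ℝ,
      lossNoiseless E Et p (c • (Et * ((2 : ℝ) • 1 - allOnes K) * Eᵀ))
        = Real.log (1 + (K - 1) * Real.exp (-(2 * c)))) ∧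
    Tendsto (fun c : ℝ => lossNoiseless E Et p (c • (Et * ((2 : ℝ) • 1 - allOnes K) * Eᵀ)))
      atTop (nhds 0) := by
  have hEE : E * Eᵀ = 1 := mul_eq_one_comm.mp hE
  have key : ∀ c : ℝ,
      lossNoiseless E Et p (c • (Et * ((2 : ℝ) • 1 - allOnes K) * Eᵀ))
        = Real.log (1 + (K - 1) * Real.exp (-(2 * c))) := by
    intro c
    set M := c • ((2 : ℝ) • (1 : Matrix (Fin K) (Fin K) ℝ) - allOnes K) with hM
    have hmid : Etᵀ * (c • (Et * ((2 : ℝ) • 1 - allOnes K) * Eᵀ)) * E = M := by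
      rw [Matrix.mul_smul, Matrix.smul_mul, hM]
      congr 1
      calc Etᵀ * (Et * ((2 : ℝ) • 1 - allOnes K) * Eᵀ) * E
          = (Etᵀ * Et) * ((2 : ℝ) • 1 - allOnes K) * (Eᵀ * E) := by
            noncomm_ring
        _ = ((2 : ℝ) • 1 - allOnes K) := by rw [hEt, hE, Matrix.one_mul, Matrix.mul_one]
    have hMentry : ∀ i j : Fin K, M i j = if i = j then c else -c := by
      intro i j
      simp only [hM, Matrix.smul_apply, Matrix.sub_apply, Matrix.smul_apply, Matrix.one_apply,
        allOnes, Matrix.of_apply, smul_eq_mul]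
      by_cases h : i = j <;> simp [h] <;> ring
    have hsum : ∀ j : Fin K, (∑ l, Real.exp (M l j)) = Real.exp c + (K - 1) * Real.exp (-c) := by
      intro j
      rw [← Finset.add_sum_erase _ _ (Finset.mem_univ j)]
      congr 1
      · rw [hMentry j j]; simp
      · rw [Finset.sum_congr rfl (fun l hl => by
          rw [hMentry l j, if_neg (Finset.mem_erase.mp hl).1])]
        rw [Finset.sum_const, Finset.card_erase_of_mem (Finset.mem_univ j), Finset.card_univ,
          Fintype.card_fin]
        have h1 : (1 : ℕ) ≤ K := le_trans (by norm_num) hK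
        rw [nsmul_eq_mul, Nat.cast_sub h1]
        push_cast
        ring
    have hKpos : (0 : ℝ) < (K : ℝ) - 1 := by
      have : (2 : ℝ) ≤ K := by exact_mod_cast hK
      linarith
    have hSpos : (0 : ℝ) < Real.exp c + (K - 1) * Real.exp (-c) :=
      by positivity
    have hfac : Real.exp c + (K - 1) * Real.exp (-c)
        = Real.exp c * (1 + (K - 1) * Real.exp (-(2 * c))) := by
      rw [mul_add, mul_one]
      congr 1
      rw [mul_comm (Real.exp c), mul_assoc, ← Real.exp_add]
      ring_nf
    have hlogpred : ∀ j : Fin K,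
        Real.log (predProb E Et (c • (Et * ((2 : ℝ) • 1 - allOnes K) * Eᵀ)) j j)
          = -Real.log (1 + (K - 1) * Real.exp (-(2 * c))) := by
      intro j
      have h1pos : (0 : ℝ) < 1 + (K - 1) * Real.exp (-(2 * c)) := by positivity
      rw [predProb, hmid, hsum j, hMentry j j, if_pos rfl,
        Real.log_div (Real.exp_ne_zero c) (ne_of_gt hSpos), Real.log_exp, hfac,
        Real.log_mul (Real.exp_ne_zero c) (ne_of_gt h1pos), Real.log_exp]
      ring
    rw [lossNoiseless]
    rw [Finset.sum_congr rfl (fun j _ => by rw [hlogpred j])]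
    rw [← Finset.sum_mul, hp1]
    ring
  refine ⟨key, ?_⟩
  have : Tendsto (fun c : ℝ => Real.log (1 + (K - 1) * Real.exp (-(2 * c)))) atTop (nhds 0) := by
    have h1 : Tendsto (fun c : ℝ => 1 + ((K : ℝ) - 1) * Real.exp (-(2 * c))) atTop (nhds 1) := by
      have h2 : Tendsto (fun c : ℝ => -(2 * c)) atTop atBot := by
        have := Tendsto.const_mul_atTop_of_neg (by norm_num : (-2 : ℝ) < 0)
          (tendsto_id : Tendsto id atTop atTop)
        exact this.congr (fun c => by simp only [id]; ring)
      have hexp : Tendsto (fun c : ℝ => Real.exp (-(2 * c))) atTop (nhds 0) :=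
        Real.tendsto_exp_atBot.comp h2
      have := tendsto_const_nhds (x := (1 : ℝ)) (f := atTop (α := ℝ)) |>.add
        (hexp.const_mul ((K : ℝ) - 1))
      simpa using this
    have := (Real.continuousAt_log (by norm_num : (1 : ℝ) ≠ 0)).tendsto.comp h1
    simpa [Function.comp_def] using this
  exact this.congr (fun c => (key c).symm)
end

section
/- Let K ≥ 2, α ∈ [0,1), c ∈ ℝ, and W = c · Ẽ·(2·I_K − J_K)·Eᵀ. Then the noisy cross-entropy loss satisfies exactly L(W) = log(1 + (K−1)·exp(−2c)) + 2·α·c·(K−1)/K, and consequently for all c ≥ 0, L(W) ≤ (K−1)·exp(−2c) + 2·α·c. -/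
open Matrix Real Filter

lemma sum_if_eq' {K : ℕ} (j : Fin K) (a b : ℝ) :
    ∑ l : Fin K, (if l = j then a else b) = a + ((K : ℝ) - 1) * b := by
  have h : ∀ l : Fin K, (if l = j then a else b) = b + (if l = j then a - b else 0) := by
    intro l; by_cases h : l = j <;> simp [h]
  simp only [h]
  rw [Finset.sum_add_distrib, Finset.sum_const, Finset.sum_ite_eq' Finset.univ j]
  simp [Finset.card_univ]
  ring

theorem stmt16 {K : ℕ} (hK : 2 ≤ K) (α : ℝ) (hα0 : 0 ≤ α) (hα1 : α < 1)
    (E Et : Matrix (Fin K) (Fin K) ℝ)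
    (hE : Eᵀ * E = 1) (hEt : Etᵀ * Et = 1)
    (p : Fin K → ℝ) (hp : ∀ j, 0 < p j) (hp1 : ∑ j, p j = 1) :
    (∀ c : ℝ,
      lossNoisy E Et p α (c • (Et * ((2 : ℝ) • 1 - allOnes K) * Eᵀ))
        = Real.log (1 + (K - 1) * Real.exp (-(2 * c))) + 2 * α * c * (K - 1) / K) ∧
    (∀ c : ℝ, 0 ≤ c →
      lossNoisy E Et p α (c • (Et * ((2 : ℝ) • 1 - allOnes K) * Eᵀ))
        ≤ (K - 1) * Real.exp (-(2 * c)) + 2 * α * c) := by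
  have hK2 : (2 : ℝ) ≤ (K : ℝ) := by exact_mod_cast hK
  have hK1 : (1 : ℝ) ≤ (K : ℝ) - 1 := by linarith
  have hKpos : (0 : ℝ) < (K : ℝ) := by linarith
  have hKne : (K : ℝ) ≠ 0 := ne_of_gt hKpos
  have key : ∀ c : ℝ,
      lossNoisy E Et p α (c • (Et * ((2 : ℝ) • 1 - allOnes K) * Eᵀ))
        = Real.log (1 + ((K : ℝ) - 1) * Real.exp (-(2 * c))) + 2 * α * c * ((K : ℝ) - 1) / K := by
    intro c
    set A : Matrix (Fin K) (Fin K) ℝ := (2 : ℝ) • 1 - allOnes K with hA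
    set W : Matrix (Fin K) (Fin K) ℝ := c • (Et * A * Eᵀ) with hW
    have hMW : Etᵀ * W * E = c • A := by
      rw [hW, Matrix.mul_smul, Matrix.smul_mul]
      congr 1
      calc Etᵀ * (Et * A * Eᵀ) * E = (Etᵀ * Et) * A * (Eᵀ * E) := by
            simp only [Matrix.mul_assoc]
        _ = A := by rw [hEt, hE, Matrix.one_mul, Matrix.mul_one]
    have hentry : ∀ i j : Fin K, (Etᵀ * W * E) i j = if i = j then c else -c := by
      intro i j
      rw [hMW]
      by_cases h : i = j <;>
        simp [hA, allOnes, Matrix.smul_apply, Matrix.sub_apply, Matrix.one_apply, h] <;> ring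
    set T : ℝ := Real.exp c + ((K : ℝ) - 1) * Real.exp (-c) with hTdef
    have hT : 0 < T := by
      have h1 := Real.exp_pos c
      have h2 := Real.exp_pos (-c)
      nlinarith
    have hsum : ∀ j : Fin K, ∑ l, Real.exp ((Etᵀ * W * E) l j) = T := by
      intro j
      simp only [hentry]
      have h : ∀ l : Fin K, Real.exp (if l = j then c else -c)
          = if l = j then Real.exp c else Real.exp (-c) := fun l => apply_ite Real.exp _ _ _
      simp only [h]
      exact sum_if_eq' j _ _
    have hlog : ∀ i j : Fin K, Real.log (predProb E Et W i j)
        = (if i = j then c else -c) - Real.log T := by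
      intro i j
      unfold predProb
      rw [hsum j, Real.log_div (Real.exp_ne_zero _) (ne_of_gt hT), Real.log_exp, hentry]
    have hinner : ∀ j : Fin K, ∑ i, pcond K α i j * Real.log (predProb E Et W i j)
        = (1 - α + α / K) * (c - Real.log T)
          + ((K : ℝ) - 1) * ((α / K) * (-c - Real.log T)) := by
      intro j
      have h : ∀ i : Fin K, pcond K α i j * Real.log (predProb E Et W i j)
          = if i = j then (1 - α + α / K) * (c - Real.log T)
            else (α / K) * (-c - Real.log T) := by
        intro i
        rw [hlog]
        unfold pcond
        by_cases h : i = j <;> simp [h]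
      simp only [h]
      exact sum_if_eq' j _ _
    have hlogT : Real.log T = c + Real.log (1 + ((K : ℝ) - 1) * Real.exp (-(2 * c))) := by
      have h1 : T = Real.exp c * (1 + ((K : ℝ) - 1) * Real.exp (-(2 * c))) := by
        rw [hTdef, mul_add, mul_one]
        congr 1
        rw [show Real.exp c * (((K : ℝ) - 1) * Real.exp (-(2 * c)))
            = ((K : ℝ) - 1) * (Real.exp c * Real.exp (-(2 * c))) from by ring,
          ← Real.exp_add]
        ring_nf
      have hpos2 : 0 < 1 + ((K : ℝ) - 1) * Real.exp (-(2 * c)) := by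
        have := Real.exp_pos (-(2 * c))
        nlinarith
      rw [h1, Real.log_mul (Real.exp_ne_zero _) (ne_of_gt hpos2), Real.log_exp]
    unfold lossNoisy
    simp only [hinner]
    rw [← Finset.sum_mul, hp1, one_mul, hlogT]
    field_simp
    ring
  refine ⟨key, fun c hc => ?_⟩
  rw [key c]
  have hexp := Real.exp_pos (-(2 * c))
  have hx : 0 ≤ ((K : ℝ) - 1) * Real.exp (-(2 * c)) := by nlinarith
  have h1 : Real.log (1 + ((K : ℝ) - 1) * Real.exp (-(2 * c)))
      ≤ ((K : ℝ) - 1) * Real.exp (-(2 * c)) := by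
    have := Real.log_le_sub_one_of_pos (show (0 : ℝ) < 1 + ((K : ℝ) - 1) * Real.exp (-(2 * c)) by linarith)
    linarith
  have h2 : 2 * α * c * ((K : ℝ) - 1) / K ≤ 2 * α * c := by
    rw [div_le_iff₀ hKpos]
    nlinarith
  linarith
end

section
/- Let K ≥ 2 and α ∈ (0,1). Suppose V is a real K×K matrix whose j-th column has diagonal entry V_{j,j} = d and constant off-diagonal entries V_{i,j} = e for all i ≠ j, and set Δ = d − e. Then the sub-task loss ℓ_j(V) := −∑_{i=1}^K p_{i|j} · log( exp(V_{i,j}) / ∑_{l} exp(V_{l,j}) ) satisfies the exact identity ℓ_j(V) = −(1−α+α/K)·Δ + log(exp(Δ) + K − 1). Moreover, the function Δ ↦ −(1−α+α/K)·Δ + log(e^Δ + K − 1) attains its global minimum over ℝ at Δ* = log(K·(1−α+α/K)/α), and its minimum value equals L* = −(1−α+α/K)·log(1−α+α/K) − (α(K−1)/K)·log(α/K). -/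
open Real

/-- The sub-task loss as a function of the margin `Δ`:
`h(Δ) = −(1−α+α/K)·Δ + log(exp Δ + K − 1)`. -/
noncomputable def hMargin (K : ℕ) (α Δ : ℝ) : ℝ :=
  -(1 - α + α / K) * Δ + Real.log (Real.exp Δ + K - 1)

theorem stmt19 {K : ℕ} (hK : 2 ≤ K) (α : ℝ) (hα0 : 0 < α) (hα1 : α < 1)
    (V : Matrix (Fin K) (Fin K) ℝ) (j : Fin K) (d e : ℝ)
    (hd : V j j = d) (he : ∀ i, i ≠ j → V i j = e) :
    (-∑ i, pcond K α i j * Real.log (Real.exp (V i j) / ∑ l, Real.exp (V l j))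
        = hMargin K α (d - e)) ∧
    (∀ Δ : ℝ, hMargin K α (Real.log (K * (1 - α + α / K) / α)) ≤ hMargin K α Δ) ∧
    hMargin K α (Real.log (K * (1 - α + α / K) / α))
        = -(1 - α + α / K) * Real.log (1 - α + α / K)
          - (α * (K - 1) / K) * Real.log (α / K) := by
  have hK1 : (1:ℝ) ≤ (K:ℝ) := by exact_mod_cast Nat.one_le_of_lt hK
  have hK2 : (2:ℝ) ≤ (K:ℝ) := by exact_mod_cast hK
  have hK0 : (0:ℝ) < (K:ℝ) := by linarith
  have hKne : (K:ℝ) ≠ 0 := ne_of_gt hK0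
  have hKcast : ((K - 1 : ℕ) : ℝ) = (K:ℝ) - 1 := by
    have h1 : 1 ≤ K := by omega
    push_cast [Nat.cast_sub h1]
    ring
  set β : ℝ := 1 - α + α / K with hβdef
  have hβpos : 0 < β := by
    have : 0 < α / K := by positivity
    simp only [hβdef]; linarith
  have h1β : 1 - β = α * ((K:ℝ) - 1) / K := by
    simp only [hβdef]; field_simp; ring
  have h1βpos : 0 < 1 - β := by
    have hK1' : 0 < (K:ℝ) - 1 := by linarith
    rw [h1β]; exact div_pos (mul_pos hα0 hK1') hK0
  have hβlt1 : β < 1 := by linarith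
  -- Part 1
  have hsum_exp : ∑ l, Real.exp (V l j) = Real.exp d + ((K:ℝ) - 1) * Real.exp e := by
    rw [← Finset.add_sum_erase Finset.univ _ (Finset.mem_univ j), hd]
    congr 1
    rw [Finset.sum_congr rfl (fun i hi => by rw [he i (Finset.ne_of_mem_erase hi)]),
      Finset.sum_const, nsmul_eq_mul, Finset.card_erase_of_mem (Finset.mem_univ j),
      Finset.card_univ, Fintype.card_fin, hKcast]
  have hSpos : 0 < ∑ l, Real.exp (V l j) := by
    rw [hsum_exp]
    have h1 := Real.exp_pos d
    have h2 := Real.exp_pos e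
    nlinarith
  have hlogterm : ∀ i : Fin K,
      Real.log (Real.exp (V i j) / ∑ l, Real.exp (V l j))
        = V i j - Real.log (∑ l, Real.exp (V l j)) := fun i => by
    rw [Real.log_div (Real.exp_ne_zero _) (ne_of_gt hSpos), Real.log_exp]
  have hLpos : 0 < Real.exp (d - e) + (K:ℝ) - 1 := by
    have := Real.exp_pos (d - e)
    linarith
  have hS2 : Real.log (∑ l, Real.exp (V l j))
      = e + Real.log (Real.exp (d - e) + (K:ℝ) - 1) := by
    have hfac : ∑ l, Real.exp (V l j)
        = Real.exp e * (Real.exp (d - e) + (K:ℝ) - 1) := by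
      rw [hsum_exp]
      have : Real.exp d = Real.exp e * Real.exp (d - e) := by
        rw [← Real.exp_add]; ring_nf
      rw [this]; ring
    rw [hfac, Real.log_mul (Real.exp_ne_zero _) (ne_of_gt hLpos), Real.log_exp]
  have hsum : ∑ i, pcond K α i j * Real.log (Real.exp (V i j) / ∑ l, Real.exp (V l j))
      = β * (d - Real.log (∑ l, Real.exp (V l j)))
        + ((K:ℝ) - 1) * (α / K) * (e - Real.log (∑ l, Real.exp (V l j))) := by
    have hterm : ∀ i ∈ Finset.univ.erase j,
        pcond K α i j * Real.log (Real.exp (V i j) / ∑ l, Real.exp (V l j))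
          = α / K * (e - Real.log (∑ l, Real.exp (V l j))) := by
      intro i hi
      have hij : i ≠ j := Finset.ne_of_mem_erase hi
      rw [hlogterm i, he i hij]
      simp only [pcond, if_neg hij]
    rw [← Finset.add_sum_erase Finset.univ _ (Finset.mem_univ j),
      Finset.sum_congr rfl hterm, Finset.sum_const, nsmul_eq_mul,
      Finset.card_erase_of_mem (Finset.mem_univ j), Finset.card_univ, Fintype.card_fin,
      hKcast, hlogterm j, hd]
    have hjj : pcond K α j j = β := by simp [pcond, hβdef]
    rw [hjj]
    ring
  have hone : β + ((K:ℝ) - 1) * (α / K) = 1 := by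
    simp only [hβdef]; field_simp; ring
  have part1 : -∑ i, pcond K α i j * Real.log (Real.exp (V i j) / ∑ l, Real.exp (V l j))
      = hMargin K α (d - e) := by
    rw [hsum, hS2]
    show _ = -β * (d - e) + Real.log (Real.exp (d - e) + (K:ℝ) - 1)
    linear_combination Real.log (Real.exp (d - e) + (K:ℝ) - 1) * hone
  -- exp of the minimizer
  have hKβα : 0 < (K:ℝ) * β / α := by positivity
  have hexpstar : Real.exp (Real.log ((K:ℝ) * β / α)) = (K:ℝ) * β / α :=
    Real.exp_log hKβα
  have halt : (K:ℝ) * β / α + (K:ℝ) - 1 = (K:ℝ) / α := by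
    simp only [hβdef]; field_simp; ring
  have hKαpos : 0 < (K:ℝ) / α := by positivity
  have hstarval : hMargin K α (Real.log ((K:ℝ) * β / α))
      = -β * Real.log ((K:ℝ) * β / α) + Real.log ((K:ℝ) / α) := by
    show -β * _ + Real.log (Real.exp (Real.log ((K:ℝ) * β / α)) + (K:ℝ) - 1) = _
    rw [hexpstar, halt]
  refine ⟨part1, ?_, ?_⟩
  · -- global minimality
    intro Δ
    set Δs : ℝ := Real.log ((K:ℝ) * β / α) with hΔs
    set s : ℝ := Real.exp (Δ - Δs) with hsdef
    have hspos : 0 < s := Real.exp_pos _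
    have hgm : s ^ β * 1 ^ (1 - β) ≤ β * s + (1 - β) * 1 :=
      Real.geom_mean_le_arith_mean2_weighted hβpos.le h1βpos.le hspos.le zero_le_one
        (by ring)
    have hpow : s ^ β = Real.exp ((Δ - Δs) * β) := by
      rw [hsdef, ← Real.exp_mul]
    have hgm2 : Real.exp ((Δ - Δs) * β) ≤ β * s + (1 - β) := by
      rw [← hpow]
      calc s ^ β = s ^ β * 1 ^ (1 - β) := by simp
      _ ≤ β * s + (1 - β) * 1 := hgm
      _ = β * s + (1 - β) := by ring
    have hmixpos : 0 < β * s + (1 - β) := lt_of_lt_of_le (Real.exp_pos _) hgm2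
    have hlog_ineq : β * Δ - β * Δs ≤ Real.log (β * s + (1 - β)) := by
      have h0 : (Δ - Δs) * β ≤ Real.log (β * s + (1 - β)) :=
        (Real.le_log_iff_exp_le hmixpos).mpr hgm2
      calc β * Δ - β * Δs = (Δ - Δs) * β := by ring
        _ ≤ _ := h0
    have hE : Real.exp Δ = s * ((K:ℝ) * β / α) := by
      rw [hsdef, ← hexpstar, ← Real.exp_add]; ring_nf
    have hfac : Real.exp Δ + (K:ℝ) - 1 = ((K:ℝ) / α) * (β * s + (1 - β)) := by
      rw [hE, h1β]; field_simp; ring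
    have hlogΔ : Real.log (Real.exp Δ + (K:ℝ) - 1)
        = Real.log ((K:ℝ) / α) + Real.log (β * s + (1 - β)) := by
      rw [hfac, Real.log_mul (ne_of_gt hKαpos) (ne_of_gt hmixpos)]
    have hΔval : hMargin K α Δ
        = -β * Δ + Real.log ((K:ℝ) / α) + Real.log (β * s + (1 - β)) := by
      show -β * Δ + Real.log (Real.exp Δ + (K:ℝ) - 1) = _
      rw [hlogΔ]; ring
    rw [hstarval, hΔval]
    clear_value s Δs β
    linarith
  · -- minimum value
    rw [hstarval]
    have hlogsplit : Real.log ((K:ℝ) * β / α) = Real.log β + Real.log ((K:ℝ) / α) := by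
      rw [← Real.log_mul (ne_of_gt hβpos) (ne_of_gt hKαpos)]
      congr 1
      field_simp
    have hloginv : Real.log (α / K) = -Real.log ((K:ℝ) / α) := by
      rw [← Real.log_inv]
      congr 1
      field_simp
    rw [hlogsplit, hloginv]
    linear_combination Real.log ((K:ℝ) / α) * h1β
end
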